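/- arXiv:1912.12449 — 6 statements merged into one kernel-verified Lean document; each statement's English description precedes it below -/
import Mathlib

section
/- Let M be a matroid on a finite set S. Every nonempty face of the base polytope BP_M is again a base polytope: for every nonempty face Q of BP_M there exists a matroid N on S such that Q = BP_N. -/
open Finset

/-- A (finite) matroid on a finite ground set `E`, given by a submodular rank function,
following the matroid rank axioms (R1)-(R3). -/
structure FinMatroid (α : Type*) [DecidableEq α] where
  E : Finset α
  r : Finset α → ℕ
  r_le_card : ∀ ⦃A : Finset α⦄, A ⊆ E → r A ≤ A.card
  r_mono : ∀ ⦃A B : Finset α⦄, A ⊆ B → B ⊆ E → r A ≤ r B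
  r_submod : ∀ ⦃A B : Finset α⦄, A ⊆ E → B ⊆ E → r (A ∪ B) + r (A ∩ B) ≤ r A + r B

namespace FinMatroid

variable {α : Type*} [DecidableEq α]

/-- A set is independent if it is a subset of the ground set whose rank is its cardinality. -/
def Indep (M : FinMatroid α) (A : Finset α) : Prop :=
  A ⊆ M.E ∧ M.r A = A.card

/-- A base is a maximal independent set. -/
def Base (M : FinMatroid α) (B : Finset α) : Prop :=
  M.Indep B ∧ ∀ ⦃A : Finset α⦄, M.Indep A → B ⊆ A → A = B

/-- A basis of `A` is a maximal independent subset of `A`. -/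
def BasisOf (M : FinMatroid α) (I A : Finset α) : Prop :=
  I ⊆ A ∧ M.Indep I ∧ ∀ ⦃J : Finset α⦄, J ⊆ A → M.Indep J → I ⊆ J → J = I

/-- A flat is a set `F` with `F = {s ∈ E : r (F ∪ {s}) = r F}`. -/
def Flat (M : FinMatroid α) (F : Finset α) : Prop :=
  F = M.E.filter (fun s => M.r (F ∪ {s}) = M.r F)

/-- A matroid is loopless if every singleton of the ground set has rank one. -/
def Loopless (M : FinMatroid α) : Prop :=
  ∀ s ∈ M.E, M.r {s} = 1

/-- The restriction `M|A` of `M` to `A`. -/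
def restrict (M : FinMatroid α) (A : Finset α) : FinMatroid α where
  E := A ∩ M.E
  r := M.r
  r_le_card := fun _ h => M.r_le_card (h.trans inter_subset_right)
  r_mono := fun _ _ h h' => M.r_mono h (h'.trans inter_subset_right)
  r_submod := fun _ _ h h' =>
    M.r_submod (h.trans inter_subset_right) (h'.trans inter_subset_right)

/-- The contraction `M/C` of `C` in `M`, with rank function `A ↦ r (A ∪ C) - r C`. -/
def contract (M : FinMatroid α) (C : Finset α) : FinMatroid α where
  E := M.E \ C
  r := fun A => M.r (A ∪ C ∩ M.E) - M.r (C ∩ M.E)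
  r_le_card := by
    intro A hA
    have hAE : A ⊆ M.E := hA.trans sdiff_subset
    have hc : C ∩ M.E ⊆ M.E := inter_subset_right
    have h1 := M.r_submod hAE hc
    have h2 := M.r_le_card hAE
    beta_reduce
    omega
  r_mono := by
    intro A B hAB hB
    have hBE : B ⊆ M.E := hB.trans sdiff_subset
    have hc : C ∩ M.E ⊆ M.E := inter_subset_right
    have h1 : M.r (A ∪ C ∩ M.E) ≤ M.r (B ∪ C ∩ M.E) :=
      M.r_mono (union_subset_union hAB (Finset.Subset.refl _)) (union_subset hBE hc)
    beta_reduce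
    omega
  r_submod := by
    intro A B hA hB
    have hAE : A ⊆ M.E := hA.trans sdiff_subset
    have hBE : B ⊆ M.E := hB.trans sdiff_subset
    have hc : C ∩ M.E ⊆ M.E := inter_subset_right
    have hAc : A ∪ C ∩ M.E ⊆ M.E := union_subset hAE hc
    have hBc : B ∪ C ∩ M.E ⊆ M.E := union_subset hBE hc
    have h1 := M.r_submod hAc hBc
    have e1 : (A ∪ C ∩ M.E) ∪ (B ∪ C ∩ M.E) = (A ∪ B) ∪ C ∩ M.E := by
      ext x; simp only [Finset.mem_union, Finset.mem_inter]; tauto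
    have e2 : (A ∪ C ∩ M.E) ∩ (B ∪ C ∩ M.E) = (A ∩ B) ∪ C ∩ M.E := by
      ext x; simp only [Finset.mem_union, Finset.mem_inter]; tauto
    rw [e1, e2] at h1
    have hABc : (A ∩ B) ∪ C ∩ M.E ⊆ M.E := union_subset (inter_subset_left.trans hAE) hc
    have hABc' : (A ∪ B) ∪ C ∩ M.E ⊆ M.E := union_subset (union_subset hAE hBE) hc
    have h2 : M.r (C ∩ M.E) ≤ M.r ((A ∩ B) ∪ C ∩ M.E) := M.r_mono subset_union_right hABc
    have h3 : M.r (C ∩ M.E) ≤ M.r (A ∪ C ∩ M.E) := M.r_mono subset_union_right hAc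
    have h4 : M.r (C ∩ M.E) ≤ M.r (B ∪ C ∩ M.E) := M.r_mono subset_union_right hBc
    have h5 : M.r (C ∩ M.E) ≤ M.r ((A ∪ B) ∪ C ∩ M.E) := M.r_mono subset_union_right hABc'
    beta_reduce
    omega

/-- `A` is a separator of `M` if `r A + r (E \ A) = r E`. -/
def Separator (M : FinMatroid α) (A : Finset α) : Prop :=
  A ⊆ M.E ∧ M.r A + M.r (M.E \ A) = M.r M.E

/-- `M` is connected (inseparable) if its ground set is nonempty and its only
separators are `∅` and `E`. -/
def Connected (M : FinMatroid α) : Prop :=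
  M.E.Nonempty ∧ ∀ A : Finset α, M.Separator A → A = ∅ ∨ A = M.E

/-- For connected `M`, a set `∅ ≠ F ⊊ E` is non-degenerate if both `M|F` and `M/F`
are connected. -/
def Nondegenerate (M : FinMatroid α) (F : Finset α) : Prop :=
  F ≠ ∅ ∧ F ⊂ M.E ∧ (M.restrict F).Connected ∧ (M.contract F).Connected

end FinMatroid

noncomputable section

open FinMatroid

/-- The indicator (incidence) vector `1^A ∈ ℝ^α` of a finite set `A`. -/
def indicatorVec {α : Type*} [DecidableEq α] (A : Finset α) : α → ℝ :=
  fun i => if i ∈ A then 1 else 0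

/-- The base polytope of a matroid: the convex hull of the indicator vectors of its bases. -/
def basePolytope {α : Type*} [DecidableEq α] (M : FinMatroid α) : Set (α → ℝ) :=
  convexHull ℝ {x | ∃ B : Finset α, M.Base B ∧ x = indicatorVec B}

/-- `Q` is a face of `P`: either `∅`, or `P` itself, or the subset of `P` where some
linear functional attains its maximum over `P` (an exposed face). -/
def IsFaceOf {α : Type*} (P Q : Set (α → ℝ)) : Prop :=
  Q = ∅ ∨ Q = P ∨ ∃ ℓ : (α → ℝ) →ₗ[ℝ] ℝ, Q = {x ∈ P | ∀ y ∈ P, ℓ y ≤ ℓ x}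

/-- The dimension of a convex set: the dimension of the direction of its affine span. -/
def sdim {α : Type*} (Q : Set (α → ℝ)) : ℕ :=
  Module.finrank ℝ (affineSpan ℝ Q).direction

end

section Basic

namespace FinMatroid

variable {α : Type*} [DecidableEq α] (M : FinMatroid α)

lemma r_empty : M.r ∅ = 0 := by
  have := M.r_le_card (Finset.empty_subset M.E); simpa using this

lemma indep_empty : M.Indep ∅ := ⟨Finset.empty_subset _, by simp [M.r_empty]⟩

lemma card_le_r_of_indep {X Y : Finset α} (hY : M.Indep Y) (h : X ⊆ Y) :
    (X.card : ℕ) ≤ M.r X := by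
  have hYE := hY.1
  have hsub := M.r_submod (h.trans hYE) ((sdiff_subset : Y \ X ⊆ Y).trans hYE)
  rw [Finset.union_sdiff_of_subset h] at hsub
  have h1 : M.r (Y \ X) ≤ (Y \ X).card := M.r_le_card (sdiff_subset.trans hYE)
  have h2 : (Y \ X).card = Y.card - X.card := Finset.card_sdiff_of_subset h
  have h3 : X.card ≤ Y.card := Finset.card_le_card h
  have h4 : M.r Y = Y.card := hY.2
  omega

lemma indep_subset {X Y : Finset α} (hY : M.Indep Y) (h : X ⊆ Y) : M.Indep X := by
  refine ⟨h.trans hY.1, le_antisymm (M.r_le_card (h.trans hY.1)) (M.card_le_r_of_indep hY h)⟩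

lemma r_union_le_add_card {A B : Finset α} (hA : A ⊆ M.E) (hB : B ⊆ M.E) :
    M.r (A ∪ B) ≤ M.r B + (A \ B).card := by
  have hsub := M.r_submod ((sdiff_subset : A \ B ⊆ A).trans hA) hB
  have h1 : M.r (A \ B) ≤ (A \ B).card := M.r_le_card (sdiff_subset.trans hA)
  have h2 : A \ B ∪ B = A ∪ B := Finset.sdiff_union_self_eq_union
  rw [h2] at hsub
  omega

lemma r_union_eq_of_forall {X S : Finset α} (hX : X ⊆ M.E) (hS : S ⊆ M.E)
    (h : ∀ y ∈ S, M.r (X ∪ {y}) = M.r X) : M.r (X ∪ S) = M.r X := by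
  classical
  induction S using Finset.induction with
  | empty => simp
  | @insert a S ha ih =>
    have haE : a ∈ M.E := hS (Finset.mem_insert_self a S)
    have hSE : S ⊆ M.E := (Finset.subset_insert a S).trans hS
    have hXS : M.r (X ∪ S) = M.r X := ih hSE (fun y hy => h y (Finset.mem_insert_of_mem hy))
    have hXa : M.r (X ∪ {a}) = M.r X := h a (Finset.mem_insert_self a S)
    have hsub := M.r_submod (Finset.union_subset hX hSE)
      (Finset.union_subset hX (Finset.singleton_subset_iff.mpr haE))
    have e1 : (X ∪ S) ∪ (X ∪ {a}) = X ∪ insert a S := by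
      ext x; simp [Finset.mem_union, Finset.mem_insert]; tauto
    rw [e1] at hsub
    have e2 : X ⊆ (X ∪ S) ∩ (X ∪ {a}) :=
      Finset.subset_inter Finset.subset_union_left Finset.subset_union_left
    have h3 : M.r X ≤ M.r ((X ∪ S) ∩ (X ∪ {a})) :=
      M.r_mono e2 ((Finset.inter_subset_left).trans (Finset.union_subset hX hSE))
    have h4 : M.r X ≤ M.r (X ∪ insert a S) :=
      M.r_mono Finset.subset_union_left
        (Finset.union_subset hX (Finset.insert_subset haE hSE))
    omega

lemma exists_aug {X T : Finset α} (hT : T ⊆ M.E) (hX : M.Indep X) (hXT : X ⊆ T)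
    (h : X.card < M.r T) : ∃ y ∈ T, y ∉ X ∧ M.Indep (X ∪ {y}) := by
  classical
  by_contra hcon
  push_neg at hcon
  have key : ∀ y ∈ T, M.r (X ∪ {y}) = M.r X := by
    intro y hy
    by_cases hyX : y ∈ X
    · have : X ∪ {y} = X := by
        rw [Finset.union_comm]; simpa using Finset.insert_eq_self.mpr hyX
      rw [this]
    · have hyE : y ∈ M.E := hT hy
      have hXyE : X ∪ {y} ⊆ M.E := Finset.union_subset hX.1 (by simpa using hyE)
      have hnind : ¬ M.Indep (X ∪ {y}) := hcon y hy hyX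
      have hcard : (X ∪ {y}).card = X.card + 1 := by
        rw [Finset.union_comm]; simpa using Finset.card_insert_of_notMem hyX
      have hle : M.r (X ∪ {y}) ≤ (X ∪ {y}).card := M.r_le_card hXyE
      have hge : M.r X ≤ M.r (X ∪ {y}) := M.r_mono Finset.subset_union_left hXyE
      have hub : M.r (X ∪ {y}) ≤ M.r X + 1 := by
        have := M.r_union_le_add_card (A := {y}) (B := X) (by simpa using hyE) hX.1
        have hc : ({y} \ X).card ≤ 1 := by
          refine le_trans (Finset.card_le_card sdiff_subset) (by simp)
        rw [Finset.union_comm] at this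
        omega
      have hne : M.r (X ∪ {y}) ≠ (X ∪ {y}).card := fun hh => hnind ⟨hXyE, hh⟩
      have hXc := hX.2
      omega
  have := M.r_union_eq_of_forall hX.1 hT key
  have hT' : M.r T ≤ M.r (X ∪ T) := M.r_mono Finset.subset_union_right
    (Finset.union_subset hX.1 hT)
  have := hX.2
  omega

lemma exists_basis_ext {I S : Finset α} (hS : S ⊆ M.E) (hI : M.Indep I) (hIS : I ⊆ S) :
    ∃ J, I ⊆ J ∧ J ⊆ S ∧ M.Indep J ∧ J.card = M.r S := by
  classical
  have hle : I.card ≤ M.r S := hI.2 ▸ M.r_mono hIS hS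
  obtain ⟨n, hn⟩ : ∃ n, M.r S - I.card = n := ⟨_, rfl⟩
  induction n generalizing I with
  | zero => exact ⟨I, Finset.Subset.refl I, hIS, hI, by omega⟩
  | succ n ih =>
    have hlt : I.card < M.r S := by omega
    obtain ⟨y, hyS, hyI, hind⟩ := M.exists_aug hS hI hIS hlt
    have hcard : (I ∪ {y}).card = I.card + 1 := by
      rw [Finset.union_comm]; simpa using Finset.card_insert_of_notMem hyI
    have hsub : I ∪ {y} ⊆ S := Finset.union_subset hIS (Finset.singleton_subset_iff.mpr hyS)
    obtain ⟨J, hJ1, hJ2, hJ3, hJ4⟩ := ih hind hsub (by omega) (by omega)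
    exact ⟨J, Finset.subset_union_left.trans hJ1, hJ2, hJ3, hJ4⟩

end FinMatroid
end Basic
section Basic2
namespace FinMatroid
variable {α : Type*} [DecidableEq α] (M : FinMatroid α)

lemma base_iff {B : Finset α} : M.Base B ↔ M.Indep B ∧ B.card = M.r M.E := by
  constructor
  · rintro ⟨hind, hmax⟩
    refine ⟨hind, ?_⟩
    obtain ⟨J, hJ1, hJ2, hJ3, hJ4⟩ := M.exists_basis_ext (Finset.Subset.refl M.E) hind hind.1
    rw [← hJ4, hmax hJ3 hJ1]
  · rintro ⟨hind, hcard⟩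
    refine ⟨hind, fun A hA hBA => ?_⟩
    have : A.card ≤ B.card := by
      have := M.r_mono hA.1 (Finset.Subset.refl M.E)
      have := hA.2
      omega
    exact (Finset.eq_of_subset_of_card_le hBA this).symm

lemma exists_base : ∃ B, M.Base B := by
  obtain ⟨J, _, hJ2, hJ3, hJ4⟩ :=
    M.exists_basis_ext (Finset.Subset.refl M.E) M.indep_empty (Finset.empty_subset _)
  exact ⟨J, M.base_iff.mpr ⟨hJ3, hJ4⟩⟩

lemma base_card {B : Finset α} (hB : M.Base B) : B.card = M.r M.E := (M.base_iff.mp hB).2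

lemma exists_max_base (W : Finset α → ℝ) :
    ∃ B, M.Base B ∧ ∀ B', M.Base B' → W B' ≤ W B := by
  classical
  obtain ⟨B₀, hB₀⟩ := M.exists_base
  set s : Finset (Finset α) := M.E.powerset.filter (fun B => M.Base B) with hs
  have hmem : ∀ B, B ∈ s ↔ M.Base B := by
    intro B
    simp only [hs, Finset.mem_filter, Finset.mem_powerset, and_iff_right_iff_imp]
    exact fun h => h.1.1
  obtain ⟨B, hB, hmax⟩ := Finset.exists_max_image s W ⟨B₀, (hmem B₀).mpr hB₀⟩
  exact ⟨B, (hmem B).mp hB, fun B' hB' => hmax B' ((hmem B').mpr hB')⟩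

end FinMatroid
end Basic2
section Tele
open scoped Classical

variable {α : Type*}

lemma teleSum {β : Type*} [AddCommGroup β] (w : α → ℝ) (f : Finset α → β) :
    ∀ G : Finset α,
      ∑ v ∈ G.image w,
        (f (G.filter (fun x => v ≤ w x)) - f (G.filter (fun x => v < w x))) = f G - f ∅ := by
  intro G
  induction G using Finset.strongInductionOn with
  | _ G ih =>
    rcases G.eq_empty_or_nonempty with hG | hG
    · subst hG; simp
    · have hV : (G.image w).Nonempty := hG.image w
      set v₀ := (G.image w).min' hV with hv₀
      have hv₀mem : v₀ ∈ G.image w := (G.image w).min'_mem hV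
      set G' := G.filter (fun x => v₀ < w x) with hG'
      have hss : G' ⊂ G := by
        obtain ⟨x, hxG, hxw⟩ := Finset.mem_image.mp hv₀mem
        refine Finset.ssubset_iff_of_subset (Finset.filter_subset _ _) |>.mpr ⟨x, hxG, ?_⟩
        simp [hG', hxG, hxw]
      have hfull : G.filter (fun x => v₀ ≤ w x) = G := by
        refine Finset.filter_true_of_mem (fun x hx => ?_)
        exact (G.image w).min'_le _ (Finset.mem_image_of_mem w hx)
      have himg : G'.image w = (G.image w).erase v₀ := by
        ext u
        simp only [Finset.mem_image, Finset.mem_erase, hG', Finset.mem_filter]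
        constructor
        · rintro ⟨x, ⟨hxG, hxw⟩, rfl⟩
          exact ⟨ne_of_gt hxw, x, hxG, rfl⟩
        · rintro ⟨hne, x, hxG, rfl⟩
          have : v₀ ≤ w x := (G.image w).min'_le _ (Finset.mem_image_of_mem w hxG)
          exact ⟨x, ⟨hxG, lt_of_le_of_ne this (Ne.symm hne)⟩, rfl⟩
      have hflt : ∀ v ∈ (G.image w).erase v₀,
          (G'.filter (fun x => v ≤ w x) = G.filter (fun x => v ≤ w x)) ∧
          (G'.filter (fun x => v < w x) = G.filter (fun x => v < w x)) := by
        intro v hv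
        obtain ⟨hne, hvmem⟩ := Finset.mem_erase.mp hv
        have hv₀v : v₀ < v :=
          lt_of_le_of_ne ((G.image w).min'_le _ hvmem) (Ne.symm hne)
        constructor
        · rw [hG', Finset.filter_filter]
          exact Finset.filter_congr (fun x _ => by
            constructor
            · rintro ⟨_, h⟩; exact h
            · intro h; exact ⟨lt_of_lt_of_le hv₀v h, h⟩)
        · rw [hG', Finset.filter_filter]
          exact Finset.filter_congr (fun x _ => by
            constructor
            · rintro ⟨_, h⟩; exact h
            · intro h; exact ⟨hv₀v.trans h, h⟩)
      rw [← Finset.add_sum_erase _ _ hv₀mem, hfull]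
      have hsum : ∑ v ∈ (G.image w).erase v₀,
          (f (G.filter (fun x => v ≤ w x)) - f (G.filter (fun x => v < w x)))
          = ∑ v ∈ G'.image w,
          (f (G'.filter (fun x => v ≤ w x)) - f (G'.filter (fun x => v < w x))) := by
        rw [himg]
        refine Finset.sum_congr rfl (fun v hv => ?_)
        rw [(hflt v hv).1, (hflt v hv).2]
      rw [hsum, ih G' hss]
      abel
end Tele
section Face
open scoped Classical
namespace FinMatroid
variable {α : Type*} [DecidableEq α]

/-- Elements of the ground set with weight at least `v`. -/
noncomputable def tge (M : FinMatroid α) (w : α → ℝ) (v : ℝ) : Finset α :=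
  M.E.filter (fun x => v ≤ w x)

/-- Elements of the ground set with weight greater than `v`. -/
noncomputable def tgt (M : FinMatroid α) (w : α → ℝ) (v : ℝ) : Finset α :=
  M.E.filter (fun x => v < w x)

variable (M : FinMatroid α) (w : α → ℝ)

lemma tge_subset (v : ℝ) : M.tge w v ⊆ M.E := Finset.filter_subset _ _
lemma tgt_subset (v : ℝ) : M.tgt w v ⊆ M.E := Finset.filter_subset _ _
lemma tgt_subset_tge (v : ℝ) : M.tgt w v ⊆ M.tge w v := by
  intro x hx
  simp only [tge, tgt, Finset.mem_filter] at *
  exact ⟨hx.1, le_of_lt hx.2⟩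

/-- The summand set in the face matroid rank function. -/
noncomputable def fms (X : Finset α) (v : ℝ) : Finset α :=
  (X ∩ M.tge w v) ∪ M.tgt w v

lemma fms_subset_tge (X : Finset α) (v : ℝ) : M.fms w X v ⊆ M.tge w v :=
  Finset.union_subset Finset.inter_subset_right (M.tgt_subset_tge w v)

lemma fms_subset (X : Finset α) (v : ℝ) : M.fms w X v ⊆ M.E :=
  (M.fms_subset_tge w X v).trans (M.tge_subset w v)

lemma fms_lb (X : Finset α) (v : ℝ) : M.r (M.tgt w v) ≤ M.r (M.fms w X v) :=
  M.r_mono Finset.subset_union_right (M.fms_subset w X v)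

lemma fms_card (X : Finset α) (v : ℝ) :
    M.r (M.fms w X v) + (X ∩ M.tgt w v).card ≤ M.r (M.tgt w v) + (X ∩ M.tge w v).card := by
  have h1 := M.r_union_le_add_card (A := X ∩ M.tge w v) (B := M.tgt w v)
    (Finset.inter_subset_right.trans (M.tge_subset w v)) (M.tgt_subset w v)
  have e : (X ∩ M.tge w v) \ M.tgt w v = (X ∩ M.tge w v) \ (X ∩ M.tgt w v) := by
    ext x
    simp only [Finset.mem_sdiff, Finset.mem_inter]
    tauto
  have hsub : X ∩ M.tgt w v ⊆ X ∩ M.tge w v :=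
    Finset.inter_subset_inter (Finset.Subset.refl X) (M.tgt_subset_tge w v)
  have hc : ((X ∩ M.tge w v) \ (X ∩ M.tgt w v)).card
      = (X ∩ M.tge w v).card - (X ∩ M.tgt w v).card := Finset.card_sdiff_of_subset hsub
  have hcle : (X ∩ M.tgt w v).card ≤ (X ∩ M.tge w v).card := Finset.card_le_card hsub
  rw [e, hc] at h1
  unfold fms
  omega

lemma fms_rank (X : Finset α) (v : ℝ) : M.r (M.fms w X v) ≤ M.r (M.tge w v) :=
  M.r_mono (M.fms_subset_tge w X v) (M.tge_subset w v)

lemma fms_mono {X Y : Finset α} (h : X ⊆ Y) (v : ℝ) :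
    M.r (M.fms w X v) ≤ M.r (M.fms w Y v) :=
  M.r_mono (Finset.union_subset_union
    (Finset.inter_subset_inter h (Finset.Subset.refl _)) (Finset.Subset.refl _))
    (M.fms_subset w Y v)

lemma fms_submod (X Y : Finset α) (v : ℝ) :
    M.r (M.fms w (X ∪ Y) v) + M.r (M.fms w (X ∩ Y) v)
      ≤ M.r (M.fms w X v) + M.r (M.fms w Y v) := by
  have e1 : M.fms w (X ∪ Y) v = M.fms w X v ∪ M.fms w Y v := by
    unfold fms; ext x
    simp only [Finset.mem_union, Finset.mem_inter]
    tauto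
  have e2 : M.fms w (X ∩ Y) v = M.fms w X v ∩ M.fms w Y v := by
    unfold fms; ext x
    simp only [Finset.mem_union, Finset.mem_inter]
    tauto
  rw [e1, e2]
  exact M.r_submod (M.fms_subset w X v) (M.fms_subset w Y v)

/-- The matroid of maximum-`w`-weight bases of `M`. -/
noncomputable def faceMatroid : FinMatroid α where
  E := M.E
  r := fun X => ∑ v ∈ M.E.image w, (M.r (M.fms w X v) - M.r (M.tgt w v))
  r_le_card := by
    intro X hX
    have key : ((∑ v ∈ M.E.image w, (M.r (M.fms w X v) - M.r (M.tgt w v)) : ℕ) : ℤ)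
        = ∑ v ∈ M.E.image w, ((M.r (M.fms w X v) : ℤ) - (M.r (M.tgt w v) : ℤ)) := by
      rw [Nat.cast_sum]
      exact Finset.sum_congr rfl (fun v _ => by
        have := M.fms_lb w X v; push_cast [Nat.cast_sub this]; ring)
    have hle : ∑ v ∈ M.E.image w, ((M.r (M.fms w X v) : ℤ) - (M.r (M.tgt w v) : ℤ))
        ≤ ∑ v ∈ M.E.image w, (((X ∩ M.tge w v).card : ℤ) - ((X ∩ M.tgt w v).card : ℤ)) := by
      refine Finset.sum_le_sum (fun v _ => ?_)
      have := M.fms_card w X v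
      push_cast
      omega
    have htele := teleSum w (fun S => ((X ∩ S).card : ℤ)) M.E
    simp only [tge, tgt] at hle
    rw [htele] at hle
    have hXE : X ∩ M.E = X := Finset.inter_eq_left.mpr hX
    rw [hXE] at hle
    simp only [Finset.inter_empty, Finset.card_empty, Nat.cast_zero, sub_zero] at hle
    beta_reduce
    have hfin : ((∑ v ∈ M.E.image w, (M.r (M.fms w X v) - M.r (M.tgt w v)) : ℕ) : ℤ)
        ≤ (X.card : ℤ) := by rw [key]; exact hle
    exact_mod_cast hfin
  r_mono := by
    intro X Y hXY hY
    refine Finset.sum_le_sum (fun v _ => ?_)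
    exact Nat.sub_le_sub_right (M.fms_mono w hXY v) _
  r_submod := by
    intro X Y hX hY
    rw [← Finset.sum_add_distrib, ← Finset.sum_add_distrib]
    refine Finset.sum_le_sum (fun v _ => ?_)
    have h1 := M.fms_submod w X Y v
    have h2 := M.fms_lb w (X ∪ Y) v
    have h3 := M.fms_lb w (X ∩ Y) v
    have h4 := M.fms_lb w X v
    have h5 := M.fms_lb w Y v
    omega

@[simp] lemma faceMatroid_E : (M.faceMatroid w).E = M.E := rfl

lemma faceMatroid_r (X : Finset α) :
    (M.faceMatroid w).r X = ∑ v ∈ M.E.image w, (M.r (M.fms w X v) - M.r (M.tgt w v)) := rfl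

lemma faceMatroid_r_cast (X : Finset α) :
    (((M.faceMatroid w).r X : ℕ) : ℤ)
      = ∑ v ∈ M.E.image w, ((M.r (M.fms w X v) : ℤ) - (M.r (M.tgt w v) : ℤ)) := by
  rw [faceMatroid_r, Nat.cast_sum]
  exact Finset.sum_congr rfl (fun v _ => by
    have := M.fms_lb w X v; push_cast [Nat.cast_sub this]; ring)

end FinMatroid
end Face
section FaceMain
open scoped Classical
namespace FinMatroid
variable {α : Type*} [DecidableEq α]

lemma sum_eq_pointwise {ι : Type*} {s : Finset ι} {f g : ι → ℤ}
    (hle : ∀ i ∈ s, f i ≤ g i) (hsum : ∑ i ∈ s, g i ≤ ∑ i ∈ s, f i) :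
    ∀ i ∈ s, f i = g i := by
  intro i hi
  by_contra hne
  have hlt : f i < g i := lt_of_le_of_ne (hle i hi) hne
  exact absurd (Finset.sum_lt_sum hle ⟨i, hi, hlt⟩) (not_lt.mpr hsum)

variable (M : FinMatroid α) (w : α → ℝ)

/-- The weight of a finite set. -/
noncomputable def wt (B : Finset α) : ℝ := ∑ i ∈ B, w i

lemma teleSum_tge {β : Type*} [AddCommGroup β] (f : Finset α → β) :
    ∑ v ∈ M.E.image w, (f (M.tge w v) - f (M.tgt w v)) = f M.E - f ∅ := by
  have := teleSum w f M.E
  simpa only [tge, tgt] using this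

lemma image_tge (v₀ : ℝ) :
    (M.tge w v₀).image w = (M.E.image w).filter (fun v => v₀ ≤ v) := by
  ext u
  simp only [Finset.mem_image, Finset.mem_filter, tge, Finset.mem_filter]
  constructor
  · rintro ⟨x, ⟨hx, hw⟩, rfl⟩; exact ⟨⟨x, hx, rfl⟩, hw⟩
  · rintro ⟨⟨x, hx, rfl⟩, hw⟩; exact ⟨x, ⟨hx, hw⟩, rfl⟩

lemma teleSum_tge_restricted {β : Type*} [AddCommGroup β] (f : Finset α → β) (v₀ : ℝ) :
    ∑ v ∈ (M.E.image w).filter (fun v => v₀ ≤ v), (f (M.tge w v) - f (M.tgt w v))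
      = f (M.tge w v₀) - f ∅ := by
  have htele := teleSum w f (M.tge w v₀)
  rw [image_tge] at htele
  rw [← htele]
  refine Finset.sum_congr rfl (fun v hv => ?_)
  obtain ⟨hvmem, hv₀v⟩ := Finset.mem_filter.mp hv
  have e1 : (M.tge w v₀).filter (fun x => v ≤ w x) = M.tge w v := by
    simp only [tge, Finset.filter_filter]
    exact Finset.filter_congr (fun x _ => by
      constructor
      · rintro ⟨_, h⟩; exact h
      · intro h; exact ⟨le_trans hv₀v h, h⟩)
  have e2 : (M.tge w v₀).filter (fun x => v < w x) = M.tgt w v := by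
    simp only [tge, tgt, Finset.filter_filter]
    exact Finset.filter_congr (fun x _ => by
      constructor
      · rintro ⟨_, h⟩; exact h
      · intro h; exact ⟨le_trans hv₀v (le_of_lt h), h⟩)
  rw [e1, e2]

lemma tgt_cases (v : ℝ) :
    M.tgt w v = ∅ ∨ ∃ v' ∈ M.E.image w, v < v' ∧ M.tgt w v = M.tge w v' := by
  set V' := (M.E.image w).filter (fun u => v < u) with hV'
  rcases V'.eq_empty_or_nonempty with hV | hV
  · left
    rw [Finset.eq_empty_iff_forall_notMem]
    intro x hx
    obtain ⟨hxE, hxv⟩ := Finset.mem_filter.mp hx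
    have : w x ∈ V' := Finset.mem_filter.mpr ⟨Finset.mem_image_of_mem w hxE, hxv⟩
    rw [Finset.eq_empty_iff_forall_notMem] at hV
    exact hV _ this
  · right
    set v' := V'.min' hV with hv'
    have hv'mem : v' ∈ V' := V'.min'_mem hV
    obtain ⟨hv'V, hvv'⟩ := Finset.mem_filter.mp hv'mem
    refine ⟨v', hv'V, hvv', ?_⟩
    ext x
    simp only [tgt, tge, Finset.mem_filter]
    constructor
    · rintro ⟨hxE, hxv⟩
      have : w x ∈ V' := Finset.mem_filter.mpr ⟨Finset.mem_image_of_mem w hxE, hxv⟩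
      exact ⟨hxE, V'.min'_le _ this⟩
    · rintro ⟨hxE, hxv⟩
      exact ⟨hxE, lt_of_lt_of_le hvv' hxv⟩

/-- If `B` meets every `tge` set in full rank, it meets every `tgt` set in full rank. -/
lemma tgt_card_of_cumulative {B : Finset α}
    (hcum : ∀ v ∈ M.E.image w, ((B ∩ M.tge w v).card : ℤ) = M.r (M.tge w v)) (v : ℝ) :
    ((B ∩ M.tgt w v).card : ℤ) = M.r (M.tgt w v) := by
  rcases M.tgt_cases w v with h | ⟨v', hv', _, h⟩
  · rw [h]; simp [r_empty]
  · rw [h]; exact hcum v' hv'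

lemma faceMatroid_r_le (X : Finset α) :
    (((M.faceMatroid w).r X : ℕ) : ℤ) ≤ (M.r (X ∩ M.E) : ℤ) := by
  rw [faceMatroid_r_cast]
  have hle : ∀ v ∈ M.E.image w,
      ((M.r (M.fms w X v) : ℤ) - (M.r (M.tgt w v) : ℤ))
        ≤ ((M.r (X ∩ M.tge w v) : ℤ) - (M.r (X ∩ M.tgt w v) : ℤ)) := by
    intro v _
    have hsub := M.r_submod (A := X ∩ M.tge w v) (B := M.tgt w v)
      (Finset.inter_subset_right.trans (M.tge_subset w v)) (M.tgt_subset w v)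
    have e : (X ∩ M.tge w v) ∩ M.tgt w v = X ∩ M.tgt w v := by
      ext x
      simp only [Finset.mem_inter]
      have hx : x ∈ M.tgt w v → x ∈ M.tge w v := fun h => M.tgt_subset_tge w v h
      tauto
    rw [e] at hsub
    have : M.fms w X v = (X ∩ M.tge w v) ∪ M.tgt w v := rfl
    rw [this]
    push_cast
    omega
  have htele := M.teleSum_tge w (fun S => (M.r (X ∩ S) : ℤ))
  calc ∑ v ∈ M.E.image w, ((M.r (M.fms w X v) : ℤ) - (M.r (M.tgt w v) : ℤ))
      ≤ ∑ v ∈ M.E.image w, ((M.r (X ∩ M.tge w v) : ℤ) - (M.r (X ∩ M.tgt w v) : ℤ)) :=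
        Finset.sum_le_sum hle
    _ = (M.r (X ∩ M.E) : ℤ) - (M.r (X ∩ ∅) : ℤ) := htele
    _ = (M.r (X ∩ M.E) : ℤ) := by simp [r_empty]

lemma indep_of_faceMatroid_indep {X : Finset α} (h : (M.faceMatroid w).Indep X) :
    M.Indep X := by
  obtain ⟨hXE, hXr⟩ := h
  have h1 := M.faceMatroid_r_le w X
  have hXE' : X ∩ M.E = X := Finset.inter_eq_left.mpr hXE
  rw [hXE', hXr] at h1
  have h2 : M.r X ≤ X.card := M.r_le_card hXE
  exact ⟨hXE, by exact_mod_cast le_antisymm h2 (by exact_mod_cast h1)⟩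

lemma faceMatroid_r_ground : (M.faceMatroid w).r M.E = M.r M.E := by
  have hfms : ∀ v : ℝ, M.fms w M.E v = M.tge w v := by
    intro v
    have h1 : M.E ∩ M.tge w v = M.tge w v := Finset.inter_eq_right.mpr (M.tge_subset w v)
    rw [fms, h1, Finset.union_eq_left.mpr (M.tgt_subset_tge w v)]
  have : (((M.faceMatroid w).r M.E : ℕ) : ℤ) = (M.r M.E : ℤ) := by
    rw [faceMatroid_r_cast]
    have htele := M.teleSum_tge w (fun S => (M.r S : ℤ))
    calc ∑ v ∈ M.E.image w, ((M.r (M.fms w M.E v) : ℤ) - (M.r (M.tgt w v) : ℤ))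
        = ∑ v ∈ M.E.image w, ((M.r (M.tge w v) : ℤ) - (M.r (M.tgt w v) : ℤ)) := by
          refine Finset.sum_congr rfl (fun v _ => by rw [hfms v])
      _ = (M.r M.E : ℤ) - (M.r ∅ : ℤ) := htele
      _ = (M.r M.E : ℤ) := by simp [r_empty]
  exact_mod_cast this

/-- A base of the face matroid meets every `tge` set in full rank. -/
lemma cumulative_of_faceMatroid_base {B : Finset α} (hB : (M.faceMatroid w).Base B) :
    ∀ v ∈ M.E.image w, ((B ∩ M.tge w v).card : ℤ) = M.r (M.tge w v) := by
  obtain ⟨hind, hcard⟩ := (M.faceMatroid w).base_iff.mp hB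
  obtain ⟨hBE, hBr⟩ := hind
  have hBE : B ⊆ M.E := hBE
  have hcard' : B.card = M.r M.E := by rw [hcard]; exact M.faceMatroid_r_ground w
  -- pointwise: summand = card difference
  have hcast := M.faceMatroid_r_cast w B
  rw [hBr] at hcast
  have hcardtele := M.teleSum_tge w (fun S => ((B ∩ S).card : ℤ))
  have hranktele := M.teleSum_tge w (fun S => (M.r S : ℤ))
  have hBEeq : B ∩ M.E = B := Finset.inter_eq_left.mpr hBE
  rw [hBEeq] at hcardtele
  simp only [Finset.inter_empty, Finset.card_empty, Nat.cast_zero, sub_zero] at hcardtele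
  simp only [r_empty, Nat.cast_zero, sub_zero] at hranktele
  have hptcard : ∀ v ∈ M.E.image w,
      ((M.r (M.fms w B v) : ℤ) - (M.r (M.tgt w v) : ℤ))
        = (((B ∩ M.tge w v).card : ℤ) - ((B ∩ M.tgt w v).card : ℤ)) := by
    refine sum_eq_pointwise (fun v _ => ?_) ?_
    · have := M.fms_card w B v; push_cast; omega
    · rw [hcardtele, ← hcast]
  have hptrank : ∀ v ∈ M.E.image w,
      ((M.r (M.fms w B v) : ℤ) - (M.r (M.tgt w v) : ℤ))
        = ((M.r (M.tge w v) : ℤ) - (M.r (M.tgt w v) : ℤ)) := by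
    refine sum_eq_pointwise (fun v _ => ?_) ?_
    · have := M.fms_rank w B v; push_cast; omega
    · rw [hranktele, ← hcast, hcard']
  -- combine and restrict-telescope
  intro v₀ hv₀
  have hrest1 := M.teleSum_tge_restricted w (fun S => ((B ∩ S).card : ℤ)) v₀
  have hrest2 := M.teleSum_tge_restricted w (fun S => (M.r S : ℤ)) v₀
  simp only [Finset.inter_empty, Finset.card_empty, Nat.cast_zero, sub_zero] at hrest1
  simp only [r_empty, Nat.cast_zero, sub_zero] at hrest2
  rw [← hrest1, ← hrest2]
  refine Finset.sum_congr rfl (fun v hv => ?_)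
  have hvmem : v ∈ M.E.image w := (Finset.mem_filter.mp hv).1
  rw [← hptcard v hvmem, hptrank v hvmem]

end FinMatroid
end FaceMain
section FaceMain2
open scoped Classical
namespace FinMatroid
variable {α : Type*} [DecidableEq α] (M : FinMatroid α) (w : α → ℝ)

/-- A base satisfying the cumulative rank conditions is independent in the face matroid. -/
lemma faceMatroid_indep_of_cumulative {B : Finset α} (hB : M.Base B)
    (hcum : ∀ v ∈ M.E.image w, ((B ∩ M.tge w v).card : ℤ) = M.r (M.tge w v)) :
    (M.faceMatroid w).r B = B.card := by
  have hBE : B ⊆ M.E := hB.1.1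
  have hpt : ∀ v ∈ M.E.image w,
      ((M.r (M.fms w B v) : ℤ) - (M.r (M.tgt w v) : ℤ))
        = (((B ∩ M.tge w v).card : ℤ) - ((B ∩ M.tgt w v).card : ℤ)) := by
    intro v hv
    have hle : (M.r (M.fms w B v) : ℤ) - (M.r (M.tgt w v) : ℤ)
        ≤ ((B ∩ M.tge w v).card : ℤ) - ((B ∩ M.tgt w v).card : ℤ) := by
      have := M.fms_card w B v; push_cast; omega
    have htgt : ((B ∩ M.tgt w v).card : ℤ) = M.r (M.tgt w v) :=
      M.tgt_card_of_cumulative w hcum v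
    have hindsub : M.Indep (B ∩ M.tge w v) := M.indep_subset hB.1 Finset.inter_subset_left
    have hge : (M.r (B ∩ M.tge w v) : ℤ) = ((B ∩ M.tge w v).card : ℤ) := by
      exact_mod_cast hindsub.2
    have hmono : M.r (B ∩ M.tge w v) ≤ M.r (M.fms w B v) :=
      M.r_mono Finset.subset_union_left (M.fms_subset w B v)
    have hmono' : (M.r (B ∩ M.tge w v) : ℤ) ≤ (M.r (M.fms w B v) : ℤ) := by exact_mod_cast hmono
    omega
  have hcast := M.faceMatroid_r_cast w B
  have hcardtele := M.teleSum_tge w (fun S => ((B ∩ S).card : ℤ))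
  have hBEeq : B ∩ M.E = B := Finset.inter_eq_left.mpr hBE
  rw [hBEeq] at hcardtele
  simp only [Finset.inter_empty, Finset.card_empty, Nat.cast_zero, sub_zero] at hcardtele
  have : (((M.faceMatroid w).r B : ℕ) : ℤ) = (B.card : ℤ) := by
    rw [hcast, ← hcardtele]
    exact Finset.sum_congr rfl hpt
  exact_mod_cast this

/-- A maximum-weight base satisfies the cumulative rank conditions. -/
lemma cumulative_of_max_base {B : Finset α} (hB : M.Base B)
    (hmax : ∀ B', M.Base B' → wt w B' ≤ wt w B) (v : ℝ) :
    ((B ∩ M.tge w v).card : ℤ) = M.r (M.tge w v) := by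
  have hBE : B ⊆ M.E := hB.1.1
  set X := B ∩ M.tge w v with hX
  have hXind : M.Indep X := M.indep_subset hB.1 Finset.inter_subset_left
  have hXcard : X.card = M.r X := hXind.2.symm
  have hle : (X.card : ℤ) ≤ (M.r (M.tge w v) : ℤ) := by
    have := M.r_mono (Finset.inter_subset_right : X ⊆ M.tge w v) (M.tge_subset w v)
    exact_mod_cast hXcard ▸ this
  rcases eq_or_lt_of_le hle with heq | hlt
  · exact heq
  exfalso
  have hltn : X.card < M.r (M.tge w v) := by exact_mod_cast hlt
  obtain ⟨y, hyT, hyX, hyind⟩ := M.exists_aug (M.tge_subset w v) hXind Finset.inter_subset_right hltn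
  have hyB : y ∉ B := fun h => hyX (Finset.mem_inter.mpr ⟨h, hyT⟩)
  set S := B ∪ {y} with hS
  have hSE : S ⊆ M.E := Finset.union_subset hBE
    (Finset.singleton_subset_iff.mpr (M.tge_subset w v hyT))
  have hrB : M.r B = M.r M.E := by
    rw [hB.1.2]; exact M.base_card hB
  have hrS : M.r S = M.r M.E := by
    refine le_antisymm (M.r_mono hSE (Finset.Subset.refl _)) ?_
    rw [← hrB]; exact M.r_mono Finset.subset_union_left hSE
  have hXyS : X ∪ {y} ⊆ S := Finset.union_subset
    (Finset.inter_subset_left.trans Finset.subset_union_left)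
    (Finset.singleton_subset_iff.mpr (Finset.mem_union_right _ (Finset.mem_singleton_self y)))
  obtain ⟨J, hJ1, hJ2, hJ3, hJ4⟩ := M.exists_basis_ext hSE hyind hXyS
  have hJbase : M.Base J := M.base_iff.mpr ⟨hJ3, by rw [hJ4, hrS]⟩
  have hScard : S.card = B.card + 1 := by
    rw [hS, Finset.union_comm]; simpa using Finset.card_insert_of_notMem hyB
  have hJcard : J.card = B.card := by rw [hJ4, hrS, ← M.base_card hB]
  have hsd : (S \ J).card = 1 := by
    rw [Finset.card_sdiff_of_subset hJ2]; omega
  obtain ⟨z, hz⟩ := Finset.card_eq_one.mp hsd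
  have hzS : z ∈ S := by
    have : z ∈ S \ J := hz ▸ Finset.mem_singleton_self z
    exact (Finset.mem_sdiff.mp this).1
  have hzJ : z ∉ J := by
    have : z ∈ S \ J := hz ▸ Finset.mem_singleton_self z
    exact (Finset.mem_sdiff.mp this).2
  have hyJ : y ∈ J := hJ1 (Finset.mem_union_right _ (Finset.mem_singleton_self y))
  have hzy : z ≠ y := fun h => hzJ (h ▸ hyJ)
  have hzB : z ∈ B := by
    rcases Finset.mem_union.mp hzS with h | h
    · exact h
    · exact absurd (Finset.mem_singleton.mp h) hzy
  have hzX : z ∉ X := fun h => hzJ (hJ1 (Finset.mem_union_left _ h))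
  have hzT : z ∉ M.tge w v := fun h => hzX (Finset.mem_inter.mpr ⟨hzB, h⟩)
  have hwz : w z < v := by
    by_contra h
    exact hzT (Finset.mem_filter.mpr ⟨hBE hzB, not_lt.mp h⟩)
  have hwy : v ≤ w y := (Finset.mem_filter.mp hyT).2
  have hJeq : J = S.erase z := by
    refine Finset.eq_of_subset_of_card_le (Finset.subset_erase.mpr ⟨hJ2, hzJ⟩) ?_
    rw [Finset.card_erase_of_mem hzS]
    omega
  have hwtS : wt w S = wt w B + w y := by
    unfold wt
    rw [hS, Finset.union_comm, ← Finset.insert_eq, Finset.sum_insert hyB]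
    ring
  have hwtJ : wt w J = wt w S - w z := by
    unfold wt
    rw [hJeq]
    exact Finset.sum_erase_eq_sub hzS
  have := hmax J hJbase
  rw [hwtJ, hwtS] at this
  linarith

/-- The weight of a cumulative base is determined by the rank function. -/
lemma wt_of_cumulative {B : Finset α} (hBE : B ⊆ M.E)
    (hcum : ∀ v ∈ M.E.image w, ((B ∩ M.tge w v).card : ℤ) = M.r (M.tge w v)) :
    wt w B = ∑ v ∈ M.E.image w, v * ((M.r (M.tge w v) : ℝ) - (M.r (M.tgt w v) : ℝ)) := by
  have htele := M.teleSum_tge w (fun S => ∑ i ∈ B ∩ S, w i)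
  have hBEeq : B ∩ M.E = B := Finset.inter_eq_left.mpr hBE
  rw [hBEeq] at htele
  simp only [Finset.inter_empty, Finset.sum_empty, sub_zero] at htele
  rw [wt, ← htele]
  refine Finset.sum_congr rfl (fun v hv => ?_)
  have hsub : B ∩ M.tgt w v ⊆ B ∩ M.tge w v :=
    Finset.inter_subset_inter (Finset.Subset.refl B) (M.tgt_subset_tge w v)
  rw [← Finset.sum_sdiff_eq_sub hsub]
  have hconst : ∀ i ∈ (B ∩ M.tge w v) \ (B ∩ M.tgt w v), w i = v := by
    intro i hi
    obtain ⟨hi1, hi2⟩ := Finset.mem_sdiff.mp hi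
    obtain ⟨hiB, hiT⟩ := Finset.mem_inter.mp hi1
    have hge : v ≤ w i := (Finset.mem_filter.mp hiT).2
    have hngt : ¬ (v < w i) := by
      intro h
      exact hi2 (Finset.mem_inter.mpr ⟨hiB, Finset.mem_filter.mpr ⟨(Finset.mem_filter.mp hiT).1, h⟩⟩)
    linarith
  rw [Finset.sum_congr rfl hconst, Finset.sum_const]
  have hcard : (((B ∩ M.tge w v) \ (B ∩ M.tgt w v)).card : ℝ)
      = ((M.r (M.tge w v) : ℝ) - (M.r (M.tgt w v) : ℝ)) := by
    rw [Finset.card_sdiff_of_subset hsub]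
    have h1 := hcum v hv
    have h2 := M.tgt_card_of_cumulative w hcum v
    have h3 : (B ∩ M.tgt w v).card ≤ (B ∩ M.tge w v).card := Finset.card_le_card hsub
    have : (((B ∩ M.tge w v).card - (B ∩ M.tgt w v).card : ℕ) : ℤ)
        = (M.r (M.tge w v) : ℤ) - (M.r (M.tgt w v) : ℤ) := by
      push_cast [Nat.cast_sub h3]
      omega
    exact_mod_cast this
  rw [nsmul_eq_mul, hcard, mul_comm]

/-- **Main combinatorial theorem**: the bases of the face matroid are exactly the
maximum-weight bases of `M`. -/
theorem faceMatroid_base_iff (B : Finset α) :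
    (M.faceMatroid w).Base B ↔ (M.Base B ∧ ∀ B', M.Base B' → wt w B' ≤ wt w B) := by
  constructor
  · intro hB
    obtain ⟨hind, hcard⟩ := (M.faceMatroid w).base_iff.mp hB
    have hMind : M.Indep B := M.indep_of_faceMatroid_indep w hind
    have hcard' : B.card = M.r M.E := by rw [hcard]; exact M.faceMatroid_r_ground w
    have hMbase : M.Base B := M.base_iff.mpr ⟨hMind, hcard'⟩
    have hcum := M.cumulative_of_faceMatroid_base w hB
    obtain ⟨B₀, hB₀, hB₀max⟩ := M.exists_max_base (wt w)
    have hcum₀ : ∀ v ∈ M.E.image w, ((B₀ ∩ M.tge w v).card : ℤ) = M.r (M.tge w v) :=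
      fun v _ => M.cumulative_of_max_base w hB₀ hB₀max v
    have hwt : wt w B = wt w B₀ := by
      rw [M.wt_of_cumulative w hMind.1 hcum, M.wt_of_cumulative w hB₀.1.1 hcum₀]
    exact ⟨hMbase, fun B' hB' => hwt ▸ hB₀max B' hB'⟩
  · rintro ⟨hB, hmax⟩
    have hcum : ∀ v ∈ M.E.image w, ((B ∩ M.tge w v).card : ℤ) = M.r (M.tge w v) :=
      fun v _ => M.cumulative_of_max_base w hB hmax v
    have hr := M.faceMatroid_indep_of_cumulative w hB hcum
    refine (M.faceMatroid w).base_iff.mpr ⟨⟨hB.1.1, hr⟩, ?_⟩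
    show B.card = (M.faceMatroid w).r M.E
    rw [M.faceMatroid_r_ground w]
    exact M.base_card hB

end FinMatroid
end FaceMain2
section Polytope
open scoped Classical
open FinMatroid

variable {α : Type*} [DecidableEq α]

lemma indicatorVec_eq_sum (B : Finset α) :
    indicatorVec B = ∑ i ∈ B, Pi.single i (1 : ℝ) := by
  funext j
  rw [Finset.sum_apply]
  simp only [indicatorVec]
  rw [Finset.sum_pi_single j (fun _ => (1:ℝ)) B]

lemma linear_indicator (ℓ : (α → ℝ) →ₗ[ℝ] ℝ) (B : Finset α) :
    ℓ (indicatorVec B) = wt (fun i => ℓ (Pi.single i 1)) B := by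
  rw [indicatorVec_eq_sum, map_sum, wt]

lemma basePolytope_eq_finset (M : FinMatroid α) :
    basePolytope M
      = convexHull ℝ ↑((M.E.powerset.filter (fun B => M.Base B)).image indicatorVec) := by
  unfold basePolytope
  congr 1
  ext x
  simp only [Finset.coe_image, Set.mem_image, Finset.mem_coe, Finset.mem_filter,
    Finset.mem_powerset, Set.mem_setOf_eq]
  constructor
  · rintro ⟨B, hB, rfl⟩; exact ⟨B, ⟨hB.1.1, hB⟩, rfl⟩
  · rintro ⟨B, ⟨_, hB⟩, rfl⟩; exact ⟨B, hB, rfl⟩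

lemma convexHull_face (F : Finset (α → ℝ)) (hF : F.Nonempty) (ℓ : (α → ℝ) →ₗ[ℝ] ℝ) :
    (convexHull ℝ ↑(F.filter (fun x => (F.image ℓ).max' (hF.image ℓ) ≤ ℓ x)) : Set (α → ℝ))
      = {x ∈ convexHull ℝ ↑F | ∀ y ∈ convexHull ℝ (↑F : Set (α → ℝ)), ℓ y ≤ ℓ x} := by
  set μ := (F.image ℓ).max' (hF.image ℓ) with hμ
  have hub : ∀ y ∈ convexHull ℝ (↑F : Set (α → ℝ)), ℓ y ≤ μ := by
    intro y hy
    have hconv : Convex ℝ {x : α → ℝ | ℓ x ≤ μ} := convex_halfSpace_le (LinearMap.isLinear ℓ) μ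
    have hsub : (↑F : Set (α → ℝ)) ⊆ {x | ℓ x ≤ μ} := fun v hv =>
      (F.image ℓ).le_max' _ (Finset.mem_image_of_mem ℓ hv)
    exact convexHull_min hsub hconv hy
  obtain ⟨v₀, hv₀F, hv₀⟩ : ∃ v ∈ F, ℓ v = μ := by
    obtain ⟨v, hv, hveq⟩ := Finset.mem_image.mp ((F.image ℓ).max'_mem (hF.image ℓ))
    exact ⟨v, hv, hveq⟩
  apply Set.Subset.antisymm
  · intro x hx
    have hxF : x ∈ convexHull ℝ (↑F : Set (α → ℝ)) :=
      convexHull_mono (Finset.coe_subset.mpr (Finset.filter_subset _ F)) hx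
    have hxμ : μ ≤ ℓ x := by
      have hconv : Convex ℝ {x : α → ℝ | μ ≤ ℓ x} := convex_halfSpace_ge (LinearMap.isLinear ℓ) μ
      refine convexHull_min ?_ hconv hx
      intro v hv
      exact (Finset.mem_filter.mp hv).2
    exact ⟨hxF, fun y hy => le_trans (hub y hy) hxμ⟩
  · rintro x ⟨hx, hmax⟩
    have hxμ : ℓ x = μ :=
      le_antisymm (hub x hx)
        (hv₀ ▸ hmax v₀ (subset_convexHull ℝ (↑F : Set (α → ℝ)) hv₀F))
    rw [Finset.convexHull_eq] at hx
    obtain ⟨ω, hω0, hω1, hωx⟩ := hx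
    have hxsum : x = ∑ y ∈ F, ω y • y := by
      rw [← hωx]
      show F.centerMass ω id = _
      rw [Finset.centerMass, hω1]
      simp [id]
    have hℓx : ℓ x = ∑ y ∈ F, ω y * ℓ y := by
      rw [hxsum, map_sum]
      exact Finset.sum_congr rfl fun y _ => by simp
    have hsupp : ∀ u ∈ F, u ∉ F.filter (fun x => μ ≤ ℓ x) → ω u = 0 := by
      intro u huF hufilt
      by_contra h0
      have hupos : 0 < ω u := lt_of_le_of_ne (hω0 u huF) (Ne.symm h0)
      have hulim : ℓ u < μ :=
        not_le.mp (fun hh => hufilt (Finset.mem_filter.mpr ⟨huF, hh⟩))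
      have hlt : ∑ y ∈ F, ω y * ℓ y < ∑ y ∈ F, ω y * μ := by
        refine Finset.sum_lt_sum (fun y hy => mul_le_mul_of_nonneg_left
          ((F.image ℓ).le_max' _ (Finset.mem_image_of_mem ℓ hy)) (hω0 y hy)) ?_
        exact ⟨u, huF, mul_lt_mul_of_pos_left hulim hupos⟩
      have hμsum : ∑ y ∈ F, ω y * μ = μ := by rw [← Finset.sum_mul, hω1, one_mul]
      rw [← hℓx, hμsum, hxμ] at hlt
      exact lt_irrefl μ hlt
    rw [Finset.convexHull_eq]
    have hωsum : ∑ y ∈ F.filter (fun x => μ ≤ ℓ x), ω y = 1 := by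
      rw [Finset.sum_subset (Finset.filter_subset _ F) hsupp, hω1]
    refine ⟨ω, fun y hy => hω0 y (Finset.filter_subset _ F hy), hωsum, ?_⟩
    show (F.filter (fun x => μ ≤ ℓ x)).centerMass ω id = x
    rw [Finset.centerMass, hωsum]
    have : ∑ y ∈ F.filter (fun x => μ ≤ ℓ x), ω y • id y = ∑ y ∈ F, ω y • id y := by
      refine Finset.sum_subset (Finset.filter_subset _ F) (fun u hu hnu => ?_)
      rw [hsupp u hu hnu, zero_smul]
    rw [this]
    simp [id, ← hxsum]

end Polytope
/-- Every nonempty face of a matroid base polytope is again a matroid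
base polytope (of a matroid on the same ground set). -/
theorem statement0 {α : Type*} [DecidableEq α] (M : FinMatroid α)
    (Q : Set (α → ℝ)) (hface : IsFaceOf (basePolytope M) Q) (hne : Q.Nonempty) :
    ∃ N : FinMatroid α, N.E = M.E ∧ basePolytope N = Q := by
  classical
  rcases hface with hQ | hQ | ⟨ℓ, hQ⟩
  · exact absurd hQ hne.ne_empty
  · exact ⟨M, rfl, hQ.symm⟩
  · set w : α → ℝ := fun i => ℓ (Pi.single i 1) with hw
    set 𝔅 : Finset (Finset α) := M.E.powerset.filter (fun B => M.Base B) with h𝔅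
    have h𝔅mem : ∀ B, B ∈ 𝔅 ↔ M.Base B := by
      intro B
      simp only [h𝔅, Finset.mem_filter, Finset.mem_powerset, and_iff_right_iff_imp]
      exact fun h => h.1.1
    set F : Finset (α → ℝ) := 𝔅.image indicatorVec with hF
    have hFne : F.Nonempty := by
      obtain ⟨B, hB⟩ := M.exists_base
      exact ⟨indicatorVec B, Finset.mem_image_of_mem _ ((h𝔅mem B).mpr hB)⟩
    have hBP : basePolytope M = convexHull ℝ ↑F := basePolytope_eq_finset M
    set μ := (F.image ℓ).max' (hFne.image ℓ) with hμ
    have hwt : ∀ B : Finset α, ℓ (indicatorVec B) = FinMatroid.wt w B := fun B =>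
      linear_indicator ℓ B
    have hub : ∀ B, M.Base B → FinMatroid.wt w B ≤ μ := by
      intro B hB
      rw [← hwt]
      exact (F.image ℓ).le_max' _
        (Finset.mem_image_of_mem ℓ (Finset.mem_image_of_mem _ ((h𝔅mem B).mpr hB)))
    obtain ⟨Bmax, hBmax, hBmaxμ⟩ : ∃ B, M.Base B ∧ FinMatroid.wt w B = μ := by
      obtain ⟨x, hxF, hxμ⟩ := Finset.mem_image.mp ((F.image ℓ).max'_mem (hFne.image ℓ))
      obtain ⟨B, hB𝔅, rfl⟩ := Finset.mem_image.mp hxF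
      exact ⟨B, (h𝔅mem B).mp hB𝔅, by rw [← hwt]; exact hxμ⟩
    refine ⟨M.faceMatroid w, rfl, ?_⟩
    -- bases of the face matroid
    have hNbase : ∀ B : Finset α,
        (M.faceMatroid w).Base B ↔ (M.Base B ∧ μ ≤ FinMatroid.wt w B) := by
      intro B
      rw [M.faceMatroid_base_iff w B]
      constructor
      · rintro ⟨hB, hmax⟩
        exact ⟨hB, hBmaxμ ▸ hmax Bmax hBmax⟩
      · rintro ⟨hB, hle⟩
        exact ⟨hB, fun B' hB' => le_trans (hub B' hB') hle⟩
    have hNeq : (M.E.powerset.filter (fun B => (M.faceMatroid w).Base B))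
        = 𝔅.filter (fun B => μ ≤ FinMatroid.wt w B) := by
      ext B
      simp only [Finset.mem_filter, Finset.mem_powerset, h𝔅]
      constructor
      · rintro ⟨hBE, hB⟩
        obtain ⟨hB1, hB2⟩ := (hNbase B).mp hB
        exact ⟨⟨hBE, hB1⟩, hB2⟩
      · rintro ⟨⟨hBE, hB1⟩, hB2⟩
        exact ⟨hBE, (hNbase B).mpr ⟨hB1, hB2⟩⟩
    have hNbp : basePolytope (M.faceMatroid w)
        = convexHull ℝ ↑((𝔅.filter (fun B => μ ≤ FinMatroid.wt w B)).image indicatorVec) := by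
      rw [basePolytope_eq_finset (M.faceMatroid w)]
      rw [show (M.faceMatroid w).E = M.E from rfl, hNeq]
    have hfilt : F.filter (fun x => μ ≤ ℓ x)
        = (𝔅.filter (fun B => μ ≤ FinMatroid.wt w B)).image indicatorVec := by
      rw [hF, Finset.filter_image]
      congr 1
      refine Finset.filter_congr (fun B _ => ?_)
      rw [hwt B]
    have hfh := convexHull_face F hFne ℓ
    rw [← hμ] at hfh
    rw [hQ, hBP, ← hfh, hfilt, hNbp]
end

section
/- Let M be a matroid on a finite set E with rank function r, and let F, L ⊆ E. There exists a base B of M with |B ∩ F| = r(F) and |B ∩ L| = r(L) if and only if {F, L} is a modular pair, i.e., r(F ∪ L) + r(F ∩ L) = r(F) + r(L). -/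
open Finset

section Aux

variable {α : Type*} [DecidableEq α]

lemma aux_indep_subset (M : FinMatroid α) {I J : Finset α} (hJ : M.Indep J) (hIJ : I ⊆ J) :
    M.Indep I := by
  obtain ⟨hJE, hJr⟩ := hJ
  refine ⟨hIJ.trans hJE, le_antisymm (M.r_le_card (hIJ.trans hJE)) ?_⟩
  have hsub := M.r_submod (hIJ.trans hJE) ((sdiff_subset : J \ I ⊆ J).trans hJE)
  have e1 : I ∪ J \ I = J := union_sdiff_of_subset hIJ
  have e2 : I ∩ (J \ I) = ∅ := inter_sdiff_self I J
  rw [e1, e2] at hsub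
  have h3 : M.r (J \ I) ≤ (J \ I).card := M.r_le_card ((sdiff_subset).trans hJE)
  have h4 : (J \ I).card = J.card - I.card := card_sdiff_of_subset hIJ
  have h5 : I.card ≤ J.card := card_le_card hIJ
  omega

lemma aux_span (M : FinMatroid α) {A : Finset α} (hA : A ⊆ M.E) (S : Finset α)
    (hS : S ⊆ M.E) (h : ∀ x ∈ S, M.r (A ∪ {x}) = M.r A) :
    M.r (A ∪ S) = M.r A := by
  induction S using Finset.induction_on with
  | empty => simp
  | @insert a S ha ih =>
    have hSE : S ⊆ M.E := (subset_insert a S).trans hS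
    have hIH : M.r (A ∪ S) = M.r A := ih hSE (fun x hx => h x (mem_insert_of_mem hx))
    have ha' : M.r (A ∪ {a}) = M.r A := h a (mem_insert_self a S)
    have haE : ({a} : Finset α) ⊆ M.E := by
      simpa using hS (mem_insert_self a S)
    have hsub := M.r_submod (union_subset hA hSE) (union_subset hA haE)
    have e1 : (A ∪ S) ∪ (A ∪ {a}) = A ∪ insert a S := by
      ext x; simp [mem_insert]; tauto
    rw [e1] at hsub
    have h2 : M.r A ≤ M.r ((A ∪ S) ∩ (A ∪ {a})) :=
      M.r_mono (subset_inter subset_union_left subset_union_left)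
        ((inter_subset_left).trans (union_subset hA hSE))
    have h3 : M.r A ≤ M.r (A ∪ insert a S) :=
      M.r_mono subset_union_left (union_subset hA (insert_subset (hS (mem_insert_self a S)) hSE))
    omega

lemma aux_exists_basis (M : FinMatroid α) {I A : Finset α} (hI : M.Indep I) (hIA : I ⊆ A)
    (hA : A ⊆ M.E) : ∃ J, I ⊆ J ∧ J ⊆ A ∧ M.Indep J ∧ J.card = M.r A := by
  by_cases hcard : I.card = M.r A
  · exact ⟨I, Finset.Subset.refl I, hIA, hI, hcard⟩
  · have hIE := hI.1
    have hle : I.card ≤ M.r A := by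
      rw [← hI.2]; exact M.r_mono hIA hA
    have hlt : I.card < M.r A := lt_of_le_of_ne hle hcard
    -- find an augmenting element
    have hex : ∃ x ∈ A \ I, M.Indep (insert x I) := by
      by_contra hcon
      push_neg at hcon
      have hall : ∀ x ∈ A \ I, M.r (I ∪ {x}) = M.r I := by
        intro x hx
        have hxE : x ∈ M.E := hA (mem_sdiff.mp hx).1
        have h1 : M.r (I ∪ {x}) ≤ (insert x I).card := by
          have : I ∪ {x} = insert x I := by ext y; simp [mem_insert]
          rw [this]; exact M.r_le_card (insert_subset hxE hIE)
        have h2 : M.r I ≤ M.r (I ∪ {x}) :=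
          M.r_mono subset_union_left (union_subset hIE (by simpa using hxE))
        have hni : ¬ M.Indep (insert x I) := hcon x hx
        have hxnI : x ∉ I := (mem_sdiff.mp hx).2
        have hcardins : (insert x I).card = I.card + 1 := card_insert_of_notMem hxnI
        have hne : M.r (I ∪ {x}) ≠ (insert x I).card := by
          intro he
          exact hni ⟨insert_subset hxE hIE, by
            rwa [show I ∪ {x} = insert x I from by ext y; simp [mem_insert]] at he⟩
        have := hI.2
        omega
      have hAI : A \ I ⊆ M.E := (sdiff_subset).trans hA
      have hspan := aux_span M hIE (A \ I) hAI hall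
      have e : I ∪ A \ I = A := union_sdiff_of_subset hIA
      rw [e] at hspan
      rw [hI.2] at hspan
      omega
    obtain ⟨x, hx, hind⟩ := hex
    have hxA : x ∈ A := (mem_sdiff.mp hx).1
    have hxnI : x ∉ I := (mem_sdiff.mp hx).2
    have hsub : insert x I ⊆ A := insert_subset hxA hIA
    have hterm : A.card - (insert x I).card < A.card - I.card := by
      have : (insert x I).card = I.card + 1 := card_insert_of_notMem hxnI
      have hle2 : (insert x I).card ≤ A.card := card_le_card hsub
      omega
    obtain ⟨J, hJ1, hJ2, hJ3, hJ4⟩ := aux_exists_basis M hind hsub hA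
    exact ⟨J, (subset_insert x I).trans hJ1, hJ2, hJ3, hJ4⟩
termination_by A.card - I.card

lemma aux_exists_base_extend (M : FinMatroid α) {I : Finset α} (hI : M.Indep I) :
    ∃ B, I ⊆ B ∧ M.Base B := by
  obtain ⟨B, hIB, hBE, hBind, hBcard⟩ :=
    aux_exists_basis M hI hI.1 (Finset.Subset.refl M.E)
  refine ⟨B, hIB, hBind, ?_⟩
  intro A hA hBA
  have h1 : A.card ≤ M.r M.E := by rw [← hA.2]; exact M.r_mono hA.1 (Finset.Subset.refl _)
  have h2 : B.card ≤ A.card := card_le_card hBA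
  exact (eq_of_subset_of_card_le hBA (by omega)).symm

end Aux

/-- There is a base `B` with `|B ∩ F| = r F` and `|B ∩ L| = r L` iff
`{F, L}` is a modular pair. -/
theorem statement2 {α : Type*} [DecidableEq α] (M : FinMatroid α)
    (F L : Finset α) (hF : F ⊆ M.E) (hL : L ⊆ M.E) :
    (∃ B : Finset α, M.Base B ∧ (B ∩ F).card = M.r F ∧ (B ∩ L).card = M.r L) ↔
      M.r (F ∪ L) + M.r (F ∩ L) = M.r F + M.r L := by
  have hFL : F ∪ L ⊆ M.E := union_subset hF hL
  have hFiL : F ∩ L ⊆ M.E := (inter_subset_left).trans hF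
  constructor
  · rintro ⟨B, hB, hBF, hBL⟩
    have hsub := M.r_submod hF hL
    have hBu : M.Indep (B ∩ (F ∪ L)) := aux_indep_subset M hB.1 inter_subset_left
    have hBi : M.Indep (B ∩ (F ∩ L)) := aux_indep_subset M hB.1 inter_subset_left
    have h1 : (B ∩ (F ∪ L)).card ≤ M.r (F ∪ L) := by
      rw [← hBu.2]; exact M.r_mono inter_subset_right hFL
    have h2 : (B ∩ (F ∩ L)).card ≤ M.r (F ∩ L) := by
      rw [← hBi.2]; exact M.r_mono inter_subset_right hFiL
    have e1 : (B ∩ F) ∪ (B ∩ L) = B ∩ (F ∪ L) := by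
      ext x; simp [mem_inter]; tauto
    have e2 : (B ∩ F) ∩ (B ∩ L) = B ∩ (F ∩ L) := by
      ext x; simp [mem_inter]; tauto
    have hie := card_union_add_card_inter (B ∩ F) (B ∩ L)
    rw [e1, e2] at hie
    omega
  · intro hmod
    -- basis I of F ∩ L
    obtain ⟨I, -, hIFL, hIind, hIcard⟩ :=
      aux_exists_basis M (I := ∅) ⟨empty_subset _, by
        have := M.r_le_card (empty_subset M.E); simp at this ⊢; omega⟩ (empty_subset _) hFiL
    -- extend to basis J_F of F
    obtain ⟨JF, hIJF, hJFF, hJFind, hJFcard⟩ :=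
      aux_exists_basis M hIind (hIFL.trans inter_subset_left) hF
    -- extend to basis J of F ∪ L
    obtain ⟨J, hJFJ, hJFL, hJind, hJcard⟩ :=
      aux_exists_basis M hJFind (hJFF.trans subset_union_left) hFL
    -- extend to base B
    obtain ⟨B, hJB, hBbase⟩ := aux_exists_base_extend M hJind
    refine ⟨B, hBbase, ?_, ?_⟩
    · -- |B ∩ F| = r F
      have hBFind : M.Indep (B ∩ F) := aux_indep_subset M hBbase.1 inter_subset_left
      have hle : (B ∩ F).card ≤ M.r F := by
        rw [← hBFind.2]; exact M.r_mono inter_subset_right hF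
      have hge : M.r F ≤ (B ∩ F).card := by
        rw [← hJFcard]
        exact card_le_card (subset_inter (hJFJ.trans hJB) hJFF)
      omega
    · -- |B ∩ L| = r L
      have hBLind : M.Indep (B ∩ L) := aux_indep_subset M hBbase.1 inter_subset_left
      have hle : (B ∩ L).card ≤ M.r L := by
        rw [← hBLind.2]; exact M.r_mono inter_subset_right hL
      -- J ∩ L has card ≥ r L
      have hJL : J ∩ L ⊆ B ∩ L := inter_subset_inter hJB (Finset.Subset.refl L)
      have hge : M.r L ≤ (J ∩ L).card := by
        -- J ∩ F is independent subset of F containing JF, so card = r F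
        have hJFsub : JF ⊆ J ∩ F := subset_inter hJFJ hJFF
        have hJFind' : M.Indep (J ∩ F) := aux_indep_subset M hJind inter_subset_left
        have hJFle : (J ∩ F).card ≤ M.r F := by
          rw [← hJFind'.2]; exact M.r_mono inter_subset_right hF
        have hJFge : M.r F ≤ (J ∩ F).card := hJFcard ▸ card_le_card hJFsub
        -- J ∩ F ∩ L contains I, indep subset of F ∩ L
        have hIsub : I ⊆ J ∩ (F ∩ L) := subset_inter (hIJF.trans hJFJ) hIFL
        have hJFLind : M.Indep (J ∩ (F ∩ L)) := aux_indep_subset M hJind inter_subset_left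
        have hJFLle : (J ∩ (F ∩ L)).card ≤ M.r (F ∩ L) := by
          rw [← hJFLind.2]; exact M.r_mono inter_subset_right hFiL
        have hJFLge : M.r (F ∩ L) ≤ (J ∩ (F ∩ L)).card := hIcard ▸ card_le_card hIsub
        -- inclusion-exclusion on J ∩ F and J ∩ L
        have e1 : (J ∩ F) ∪ (J ∩ L) = J := by
          apply Finset.Subset.antisymm
          · exact union_subset inter_subset_left inter_subset_left
          · intro x hx
            have := hJFL hx
            simp only [mem_union, mem_inter] at this ⊢
            tauto
        have e2 : (J ∩ F) ∩ (J ∩ L) = J ∩ (F ∩ L) := by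
          ext x; simp [mem_inter]; tauto
        have hie := card_union_add_card_inter (J ∩ F) (J ∩ L)
        rw [e1, e2] at hie
        omega
      have := card_le_card hJL
      omega
end

section
/- Let M be a matroid on a finite set E with rank function r, let F, L ⊆ E, and let N := (M/(F ∩ L))|_{(F ∪ L) ∖ (F ∩ L)} with rank function r_N. Then r(F ∪ L) + r(F ∩ L) = r(F) + r(L) if and only if r_N(F ∖ L) + r_N(L ∖ F) = r_N((F ∪ L) ∖ (F ∩ L)), i.e., if and only if F ∖ L and L ∖ F are separators of N. -/
open Finset

/-- `{F, L}` is a modular pair iff `F \ L` and `L \ F` are separators of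
`N := (M/(F ∩ L))|_{(F ∪ L) \ (F ∩ L)}`, i.e. `r_N(F \ L) + r_N(L \ F) = r_N(E(N))`. -/
theorem statement3 {α : Type*} [DecidableEq α] (M : FinMatroid α)
    (F L : Finset α) (hF : F ⊆ M.E) (hL : L ⊆ M.E) :
    M.r (F ∪ L) + M.r (F ∩ L) = M.r F + M.r L ↔
      ((M.contract (F ∩ L)).restrict ((F ∪ L) \ (F ∩ L))).r (F \ L) +
          ((M.contract (F ∩ L)).restrict ((F ∪ L) \ (F ∩ L))).r (L \ F) =
        ((M.contract (F ∩ L)).restrict ((F ∪ L) \ (F ∩ L))).r ((F ∪ L) \ (F ∩ L)) := by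
  have hFL : F ∩ L ⊆ M.E := inter_subset_left.trans hF
  have hcap : (F ∩ L) ∩ M.E = F ∩ L := inter_eq_left.mpr hFL
  have e1 : (F \ L) ∪ F ∩ L = F := by ext x; simp; tauto
  have e2 : (L \ F) ∪ F ∩ L = L := by ext x; simp; tauto
  have e3 : ((F ∪ L) \ (F ∩ L)) ∪ F ∩ L = F ∪ L := by ext x; simp; tauto
  have h1 : M.r (F ∩ L) ≤ M.r F := M.r_mono inter_subset_left hF
  have h2 : M.r (F ∩ L) ≤ M.r L := M.r_mono inter_subset_right hL
  have h3 : M.r (F ∩ L) ≤ M.r (F ∪ L) :=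
    M.r_mono (inter_subset_left.trans subset_union_left) (union_subset hF hL)
  simp only [FinMatroid.restrict, FinMatroid.contract, hcap, e1, e2, e3]
  omega
end

section
/- Let M be a matroid on a finite set E with rank function r and let F_1, …, F_m ⊆ E. If B is a base of M satisfying |B ∩ F_i| = r(F_i) for every i ∈ {1,…,m}, then for every σ ⊆ {1,…,m}, the set B ∩ (F_σ⁻ ∖ F_σ⁺) is a basis of F_σ⁻ ∖ F_σ⁺ in the contraction M/F_σ⁺. -/
open Finset

/-- `F_σ⁺ := ⋃_{i ∈ σ} F i`. -/
def Fplus {α : Type*} [DecidableEq α] {m : ℕ} (F : Fin m → Finset α) (σ : Finset (Fin m)) :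
    Finset α :=
  σ.sup F

/-- `F_σ⁻ := ⋂_{j ∉ σ} F j`, with the empty intersection equal to the ground set `E`. -/
def Fminus {α : Type*} [DecidableEq α] {m : ℕ} (M : FinMatroid α) (F : Fin m → Finset α)
    (σ : Finset (Fin m)) : Finset α :=
  M.E.filter (fun x => ∀ j, j ∉ σ → x ∈ F j)

section Aux

open FinMatroid

variable {α : Type*} [DecidableEq α]

lemma fm_r_empty (M : FinMatroid α) : M.r ∅ = 0 :=
  Nat.le_zero.mp (by simpa using M.r_le_card (Finset.empty_subset _))

lemma fm_indep_subset (M : FinMatroid α) {A S : Finset α} (hA : M.Indep A) (hS : S ⊆ A) :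
    M.Indep S := by
  obtain ⟨hAE, hr⟩ := hA
  have hSE : S ⊆ M.E := hS.trans hAE
  refine ⟨hSE, le_antisymm (M.r_le_card hSE) ?_⟩
  have hDE : A \ S ⊆ M.E := Finset.sdiff_subset.trans hAE
  have hsub := M.r_submod hSE hDE
  rw [Finset.union_sdiff_of_subset hS, Finset.inter_sdiff_self] at hsub
  have h1 := M.r_le_card hDE
  have h2 : (A \ S).card = A.card - S.card := Finset.card_sdiff_of_subset hS
  have h3 : S.card ≤ A.card := Finset.card_le_card hS
  have h4 := fm_r_empty M
  omega

lemma fm_card_inter_le_r (M : FinMatroid α) {B X : Finset α} (hB : M.Indep B)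
    (hX : X ⊆ M.E) : (B ∩ X).card ≤ M.r X :=
  calc (B ∩ X).card = M.r (B ∩ X) :=
        ((fm_indep_subset M hB Finset.inter_subset_left).2).symm
    _ ≤ M.r X := M.r_mono Finset.inter_subset_right hX

lemma fm_r_union_eq (M : FinMatroid α) {A : Finset α} (hA : A ⊆ M.E)
    {D : Finset α} (hD : D ⊆ M.E) (h : ∀ x ∈ D, M.r (A ∪ {x}) = M.r A) :
    M.r (A ∪ D) = M.r A := by
  induction D using Finset.induction_on with
  | empty => simp
  | @insert x D hx ih =>
    have hDE : D ⊆ M.E := (Finset.subset_insert _ _).trans hD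
    have ih' := ih hDE (fun y hy => h y (Finset.mem_insert_of_mem hy))
    have hxE : ({x} : Finset α) ⊆ M.E := by
      simpa using hD (Finset.mem_insert_self x D)
    have hsub := M.r_submod (Finset.union_subset hA hDE) (Finset.union_subset hA hxE)
    have e1 : (A ∪ D) ∪ (A ∪ {x}) = A ∪ insert x D := by
      ext y; simp [Finset.mem_insert]; tauto
    rw [e1] at hsub
    have e2 : A ⊆ (A ∪ D) ∩ (A ∪ {x}) :=
      Finset.subset_inter Finset.subset_union_left Finset.subset_union_left
    have h2 : M.r A ≤ M.r ((A ∪ D) ∩ (A ∪ {x})) :=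
      M.r_mono e2 (Finset.inter_subset_right.trans (Finset.union_subset hA hxE))
    have h3 : M.r A ≤ M.r (A ∪ insert x D) :=
      M.r_mono Finset.subset_union_left (Finset.union_subset hA (Finset.insert_subset_iff.mpr ⟨hD (Finset.mem_insert_self x D), hDE⟩))
    have h4 := h x (Finset.mem_insert_self x D)
    omega

lemma fm_base_rank (M : FinMatroid α) {B : Finset α} (hB : M.Base B) :
    M.r M.E = B.card := by
  obtain ⟨⟨hBE, hrB⟩, hmax⟩ := hB
  have key : ∀ x ∈ M.E, M.r (B ∪ {x}) = M.r B := by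
    intro x hx
    by_cases hxB : x ∈ B
    · congr 1
      exact Finset.union_eq_left.mpr (Finset.singleton_subset_iff.mpr hxB)
    · have hsub : B ∪ {x} ⊆ M.E := Finset.union_subset hBE (by simpa using hx)
      have hle : M.r (B ∪ {x}) ≤ (B ∪ {x}).card := M.r_le_card hsub
      have hge : M.r B ≤ M.r (B ∪ {x}) := M.r_mono Finset.subset_union_left hsub
      have hcard : (B ∪ {x}).card = B.card + 1 := by
        rw [Finset.union_comm, ← Finset.insert_eq, Finset.card_insert_of_notMem hxB]
      rcases lt_or_eq_of_le hle with h | h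
      · omega
      · exfalso
        have hind : M.Indep (B ∪ {x}) := ⟨hsub, h⟩
        have := hmax hind Finset.subset_union_left
        apply hxB
        have : x ∈ B ∪ {x} := by simp
        rwa [hmax hind Finset.subset_union_left] at this
  have := fm_r_union_eq M hBE (le_refl M.E) key
  rw [Finset.union_eq_right.mpr hBE] at this
  rw [this, hrB]

/-- Closure of the "B-spanned" family under union and intersection. -/
lemma fm_family_closed (M : FinMatroid α) {B X Y : Finset α} (hB : M.Indep B)
    (hX : X ⊆ M.E) (hY : Y ⊆ M.E)
    (hrX : M.r X = (B ∩ X).card) (hrY : M.r Y = (B ∩ Y).card) :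
    M.r (X ∪ Y) = (B ∩ (X ∪ Y)).card ∧ M.r (X ∩ Y) = (B ∩ (X ∩ Y)).card := by
  have hsub := M.r_submod hX hY
  have hU : (B ∩ (X ∪ Y)).card ≤ M.r (X ∪ Y) :=
    fm_card_inter_le_r M hB (Finset.union_subset hX hY)
  have hI : (B ∩ (X ∩ Y)).card ≤ M.r (X ∩ Y) :=
    fm_card_inter_le_r M hB (Finset.inter_subset_left.trans hX)
  have hmod : (B ∩ (X ∪ Y)).card + (B ∩ (X ∩ Y)).card = (B ∩ X).card + (B ∩ Y).card := by
    have e1 : B ∩ X ∪ B ∩ Y = B ∩ (X ∪ Y) := (Finset.inter_union_distrib_left _ _ _).symm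
    have e2 : (B ∩ X) ∩ (B ∩ Y) = B ∩ (X ∩ Y) := by
      ext z; simp only [Finset.mem_inter]; tauto
    have := Finset.card_union_add_card_inter (B ∩ X) (B ∩ Y)
    rw [e1, e2] at this
    omega
  omega

end Aux


section Helpers

open FinMatroid

variable {α : Type*} [DecidableEq α] {m : ℕ}

lemma fplus_subset_E (M : FinMatroid α) (F : Fin m → Finset α) (hF : ∀ i, F i ⊆ M.E)
    (σ : Finset (Fin m)) : Fplus F σ ⊆ M.E :=
  Finset.sup_le fun i _ => hF i

lemma fm_r_fplus (M : FinMatroid α) (F : Fin m → Finset α) (hF : ∀ i, F i ⊆ M.E)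
    {B : Finset α} (hB : M.Indep B) (hcard : ∀ i, (B ∩ F i).card = M.r (F i))
    (σ : Finset (Fin m)) :
    M.r (Fplus F σ) = (B ∩ Fplus F σ).card := by
  induction σ using Finset.induction_on with
  | empty => simp [Fplus, fm_r_empty]
  | @insert i σ hi ih =>
    have e : Fplus F (insert i σ) = F i ∪ Fplus F σ := Finset.sup_insert
    rw [e]
    exact (fm_family_closed M hB (hF i) (fplus_subset_E M F hF σ) (hcard i).symm ih).1

lemma fm_r_filter (M : FinMatroid α) (F : Fin m → Finset α) (hF : ∀ i, F i ⊆ M.E)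
    {B : Finset α} (hBb : M.Base B) (hcard : ∀ i, (B ∩ F i).card = M.r (F i))
    (τ : Finset (Fin m)) :
    M.r (M.E.filter (fun x => ∀ j ∈ τ, x ∈ F j))
      = (B ∩ M.E.filter (fun x => ∀ j ∈ τ, x ∈ F j)).card := by
  induction τ using Finset.induction_on with
  | empty =>
    simp only [Finset.notMem_empty, false_implies, implies_true, Finset.filter_true_of_mem]
    rw [fm_base_rank M hBb, Finset.inter_eq_left.mpr hBb.1.1]
  | @insert j τ hj ih =>
    have e : M.E.filter (fun x => ∀ k ∈ insert j τ, x ∈ F k)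
        = F j ∩ M.E.filter (fun x => ∀ k ∈ τ, x ∈ F k) := by
      ext x
      simp only [Finset.mem_filter, Finset.mem_inter, Finset.mem_insert]
      constructor
      · rintro ⟨hxE, h⟩
        exact ⟨h j (Or.inl rfl), hxE, fun k hk => h k (Or.inr hk)⟩
      · rintro ⟨hxF, hxE, h⟩
        exact ⟨hxE, fun k hk => hk.elim (fun h' => h' ▸ hxF) (h k)⟩
    rw [e]
    exact (fm_family_closed M hBb.1 (hF j) (Finset.filter_subset _ _) (hcard j).symm ih).2

end Helpers

/-- If `B` is a base with `|B ∩ F i| = r (F i)` for all `i`, then for every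
`σ ⊆ [m]`, the set `B ∩ (F_σ⁻ \ F_σ⁺)` is a basis of `F_σ⁻ \ F_σ⁺` in `M / F_σ⁺`. -/
theorem statement4 {α : Type*} [DecidableEq α] {m : ℕ} (M : FinMatroid α)
    (F : Fin m → Finset α) (hF : ∀ i, F i ⊆ M.E)
    (B : Finset α) (hB : M.Base B) (hcard : ∀ i, (B ∩ F i).card = M.r (F i))
    (σ : Finset (Fin m)) :
    (M.contract (Fplus F σ)).BasisOf (B ∩ (Fminus M F σ \ Fplus F σ))
      (Fminus M F σ \ Fplus F σ) := by
  classical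
  set C := Fplus F σ with hC
  set N := Fminus M F σ with hN
  set A := N \ C with hA
  set I := B ∩ A with hI
  have hBi : M.Indep B := hB.1
  have hBE : B ⊆ M.E := hBi.1
  have hCE : C ⊆ M.E := fplus_subset_E M F hF σ
  have hNE : N ⊆ M.E := Finset.filter_subset _ _
  have hrC : M.r C = (B ∩ C).card := fm_r_fplus M F hF hBi hcard σ
  have hNfilter : N = M.E.filter (fun x => ∀ j ∈ σᶜ, x ∈ F j) := by
    rw [hN, Fminus]
    apply Finset.filter_congr
    intro x _
    simp [Finset.mem_compl]
  have hrN : M.r N = (B ∩ N).card := by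
    rw [hNfilter]; exact fm_r_filter M F hF hB hcard σᶜ
  have hrG : M.r (N ∪ C) = (B ∩ (N ∪ C)).card :=
    (fm_family_closed M hBi hNE hCE hrN hrC).1
  have hCint : C ∩ M.E = C := Finset.inter_eq_left.mpr hCE
  have rc_def : ∀ X : Finset α, (M.contract C).r X = M.r (X ∪ C) - M.r C := by
    intro X
    show M.r (X ∪ C ∩ M.E) - M.r (C ∩ M.E) = _
    rw [hCint]
  have hIB : I ⊆ B := Finset.inter_subset_left
  have hIA : I ⊆ A := Finset.inter_subset_right
  have hIindep : M.Indep I := fm_indep_subset M hBi hIB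
  have hBI : B ∩ I = I := Finset.inter_eq_right.mpr hIB
  have hIE : I ⊆ M.E := hIindep.1
  have hrI : M.r I = (B ∩ I).card := by rw [hBI]; exact hIindep.2
  have hrIC : M.r (I ∪ C) = (B ∩ (I ∪ C)).card :=
    (fm_family_closed M hBi hIE hCE hrI hrC).1
  have hdisjAC : ∀ x, x ∈ A → x ∉ C := fun x hx => (Finset.mem_sdiff.mp hx).2
  have hdisjI : Disjoint I (B ∩ C) := by
    rw [Finset.disjoint_left]
    intro x hx hx'
    exact hdisjAC x (hIA hx) (Finset.mem_inter.mp hx').2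
  have hBIC : B ∩ (I ∪ C) = I ∪ B ∩ C := by
    rw [Finset.inter_union_distrib_left, hBI]
  have hcardIC : (I ∪ B ∩ C).card = I.card + (B ∩ C).card :=
    Finset.card_union_of_disjoint hdisjI
  have hAunion : A ∪ C = N ∪ C := Finset.sdiff_union_self_eq_union
  have hBNC : B ∩ (N ∪ C) = I ∪ B ∩ C := by
    rw [← hAunion, Finset.inter_union_distrib_left, hI]
  have hAsub : A ⊆ (M.contract C).E := by
    show A ⊆ M.E \ C
    exact Finset.sdiff_subset_sdiff hNE (Finset.Subset.refl _)
  have hrCle : M.r C ≤ M.r (I ∪ C) := M.r_mono Finset.subset_union_right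
    (Finset.union_subset hIE hCE)
  refine ⟨hIA, ⟨hIA.trans hAsub, ?_⟩, ?_⟩
  · rw [rc_def, hrIC, hBIC, hcardIC, hrC]
    omega
  · intro J hJA hJind hIJ
    have hJcard : (M.contract C).r J = J.card := hJind.2
    have hmono : (M.contract C).r J ≤ (M.contract C).r A :=
      (M.contract C).r_mono hJA hAsub
    have hrcA : (M.contract C).r A = I.card := by
      rw [rc_def, hAunion, hrG, hBNC, hcardIC, hrC]
      omega
    have hle : J.card ≤ I.card := by omega
    exact Finset.eq_of_subset_of_card_le hIJ hle |>.symm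
end

section
/- Let M be a matroid on a finite set E with rank function r and let F_1, …, F_m ⊆ E. If I ⊆ E is such that for every σ ⊆ {1,…,m} the set I ∩ (F_σ⁻ ∖ F_σ⁺) is independent in the contraction M/F_σ⁺, then for each i ∈ {1,…,m} the set I ∩ F_i is independent in M|F_i and the set I ∖ F_i is independent in M/F_i. -/
open Finset

/-- If `I ∩ (F_σ⁻ \ F_σ⁺)` is independent in `M / F_σ⁺` for every `σ`,
then `I ∩ F i` is independent in `M | F i` and `I \ F i` is independent in `M / F i`
for each `i`. -/
theorem statement5 {α : Type*} [DecidableEq α] {m : ℕ} (M : FinMatroid α)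
    (F : Fin m → Finset α) (hF : ∀ i, F i ⊆ M.E)
    (I : Finset α) (hI : I ⊆ M.E)
    (hind : ∀ σ : Finset (Fin m),
      (M.contract (Fplus F σ)).Indep (I ∩ (Fminus M F σ \ Fplus F σ)))
    (i : Fin m) :
    (M.restrict (F i)).Indep (I ∩ F i) ∧ (M.contract (F i)).Indep (I \ F i) := by
  classical
  -- Basic facts
  have hCE : ∀ σ : Finset (Fin m), Fplus F σ ⊆ M.E := by
    intro σ; exact Finset.sup_le fun j _ => hF j
  have hminE : ∀ σ : Finset (Fin m), Fminus M F σ ⊆ M.E := by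
    intro σ; exact Finset.filter_subset _ _
  have hr0 : M.r ∅ = 0 := by
    have := M.r_le_card (Finset.empty_subset M.E); simpa using this
  -- upper bound for rank in contraction form
  have hupper : ∀ A C : Finset α, A ⊆ M.E → C ⊆ M.E →
      M.r (A ∪ C) ≤ A.card + M.r C := by
    intro A C hA hC
    have h1 := M.r_submod hA hC
    have h2 := M.r_le_card hA
    omega
  -- the base hypothesis in rank form
  have hbase : ∀ σ : Finset (Fin m),
      M.r ((I ∩ (Fminus M F σ \ Fplus F σ)) ∪ Fplus F σ)
        = (I ∩ (Fminus M F σ \ Fplus F σ)).card + M.r (Fplus F σ) := by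
    intro σ
    obtain ⟨h1, h2⟩ := hind σ
    have hc : Fplus F σ ∩ M.E = Fplus F σ := Finset.inter_eq_left.2 (hCE σ)
    simp only [FinMatroid.contract, hc] at h2
    have hsubE : (I ∩ (Fminus M F σ \ Fplus F σ)) ∪ Fplus F σ ⊆ M.E :=
      Finset.union_subset ((Finset.inter_subset_left).trans hI) (hCE σ)
    have hle : M.r (Fplus F σ) ≤ M.r ((I ∩ (Fminus M F σ \ Fplus F σ)) ∪ Fplus F σ) :=
      M.r_mono Finset.subset_union_right hsubE
    omega
  -- monotonicity of contraction-independence under shrinking the contracted set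
  have hsub : ∀ A C C' : Finset α, A ⊆ M.E → C' ⊆ M.E → C ⊆ C' →
      (∀ x ∈ A, x ∉ C') → M.r (A ∪ C') = A.card + M.r C' →
      M.r (A ∪ C) = A.card + M.r C := by
    intro A C C' hA hC' hCC' hd h
    have hCsub : C ⊆ M.E := hCC'.trans hC'
    have hACE : A ∪ C ⊆ M.E := Finset.union_subset hA hCsub
    have h1 := M.r_submod hACE hC'
    have e1 : (A ∪ C) ∪ C' = A ∪ C' := by
      ext x
      simp only [Finset.mem_union]
      constructor
      · rintro ((h | h) | h)
        · exact Or.inl h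
        · exact Or.inr (hCC' h)
        · exact Or.inr h
      · rintro (h | h)
        · exact Or.inl (Or.inl h)
        · exact Or.inr h
    have e2 : (A ∪ C) ∩ C' = C := by
      ext x
      simp only [Finset.mem_inter, Finset.mem_union]
      constructor
      · rintro ⟨h1' | h1', h2'⟩
        · exact absurd h2' (hd x h1')
        · exact h1'
      · intro hx; exact ⟨Or.inr hx, hCC' hx⟩
    rw [e1, e2] at h1
    have h2 := hupper A C hA hCsub
    omega
  -- the key induction
  have key : ∀ k : ℕ, ∀ σ T : Finset (Fin m), σ ⊆ T → (T \ σ).card = k →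
      M.r ((I ∩ (Fminus M F T \ Fplus F σ)) ∪ Fplus F σ)
        = (I ∩ (Fminus M F T \ Fplus F σ)).card + M.r (Fplus F σ) := by
    intro k
    induction k with
    | zero =>
      intro σ T hσT hcard
      have hTσ : T = σ := by
        have h0 : T \ σ = ∅ := Finset.card_eq_zero.1 hcard
        apply Finset.Subset.antisymm _ hσT
        intro x hx
        by_contra hxσ
        have : x ∈ T \ σ := Finset.mem_sdiff.2 ⟨hx, hxσ⟩
        simp [h0] at this
      rw [hTσ]
      exact hbase σ
    | succ k ih =>
      intro σ T hσT hcard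
      obtain ⟨j, hj⟩ : (T \ σ).Nonempty := Finset.card_pos.1 (by omega)
      obtain ⟨hjT, hjσ⟩ := Finset.mem_sdiff.1 hj
      have hσT₀ : σ ⊆ T.erase j := fun x hx =>
        Finset.mem_erase.2 ⟨fun h => hjσ (h ▸ hx), hσT hx⟩
      have hc1 : (T.erase j \ σ).card = k := by
        have e : T.erase j \ σ = (T \ σ).erase j := by
          ext x
          simp only [Finset.mem_sdiff, Finset.mem_erase]
          tauto
        rw [e, Finset.card_erase_of_mem hj, hcard]
        omega
      have hc2 : (T \ insert j σ).card = k := by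
        have e : T \ insert j σ = (T \ σ).erase j := by
          ext x
          simp only [Finset.mem_sdiff, Finset.mem_erase, Finset.mem_insert]
          tauto
        rw [e, Finset.card_erase_of_mem hj, hcard]
        omega
      have hins : insert j σ ⊆ T := Finset.insert_subset hjT hσT
      have IH1 := ih σ (T.erase j) hσT₀ hc1
      have IH2 := ih (insert j σ) T hins hc2
      set C := Fplus F σ with hC
      have hplus : Fplus F (insert j σ) = F j ∪ C := by
        simp [Fplus, Finset.sup_insert, hC]
      rw [hplus] at IH2
      set X := I ∩ (Fminus M F (T.erase j) \ C) with hX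
      set Y := I ∩ (Fminus M F T \ (F j ∪ C)) with hY
      have hXj : X ⊆ F j := by
        intro x hx
        have hx2 := (Finset.mem_sdiff.1 (Finset.mem_inter.1 hx).2).1
        have := (Finset.mem_filter.1 hx2).2
        exact this j (Finset.notMem_erase j T)
      have hXE : X ⊆ M.E := (Finset.inter_subset_left).trans hI
      have hYE : Y ⊆ M.E := (Finset.inter_subset_left).trans hI
      have hXC : ∀ x ∈ X, x ∉ C := fun x hx =>
        (Finset.mem_sdiff.1 (Finset.mem_inter.1 hx).2).2
      have hYd : ∀ x ∈ Y, x ∉ F j ∪ C := fun x hx =>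
        (Finset.mem_sdiff.1 (Finset.mem_inter.1 hx).2).2
      have hXCE : X ∪ C ⊆ M.E := Finset.union_subset hXE (hCE σ)
      have hFjCE : F j ∪ C ⊆ M.E := Finset.union_subset (hF j) (hCE σ)
      have hXCsub : X ∪ C ⊆ F j ∪ C := Finset.union_subset_union hXj (Finset.Subset.refl C)
      have hYd' : ∀ x ∈ Y, x ∉ X ∪ C := fun x hx h => hYd x hx (hXCsub h)
      have h5 := hsub Y (X ∪ C) (F j ∪ C) hYE hFjCE hXCsub hYd IH2
      -- set identity
      have hunion : X ∪ Y = I ∩ (Fminus M F T \ C) := by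
        ext x
        simp only [hX, hY, Finset.mem_union, Finset.mem_inter, Finset.mem_sdiff, Fminus,
          Finset.mem_filter]
        constructor
        · rintro (⟨hxI, ⟨hxE, hall⟩, hxC⟩ | ⟨hxI, ⟨hxE, hall⟩, hxFC⟩)
          · refine ⟨hxI, ⟨hxE, fun l hl => hall l fun h => hl (Finset.mem_of_mem_erase h)⟩, hxC⟩
          · exact ⟨hxI, ⟨hxE, hall⟩, fun h => hxFC (Or.inr h)⟩
        · rintro ⟨hxI, ⟨hxE, hall⟩, hxC⟩
          by_cases hxj : x ∈ F j
          · refine Or.inl ⟨hxI, ⟨hxE, fun l hl => ?_⟩, hxC⟩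
            by_cases hlj : l = j
            · exact hlj ▸ hxj
            · exact hall l fun h => hl (Finset.mem_erase.2 ⟨hlj, h⟩)
          · refine Or.inr ⟨hxI, ⟨hxE, hall⟩, fun h => ?_⟩
            rcases h with h' | h'
            · exact hxj h'
            · exact hxC h'
      have hdXY : Disjoint X Y := by
        rw [Finset.disjoint_left]
        intro x hx hxY
        exact hYd x hxY (Finset.mem_union.2 (Or.inl (hXj hx)))
      have hcardu : (I ∩ (Fminus M F T \ C)).card = X.card + Y.card := by
        rw [← hunion, Finset.card_union_of_disjoint hdXY]
      have heq : (I ∩ (Fminus M F T \ C)) ∪ C = Y ∪ (X ∪ C) := by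
        rw [← hunion]
        ext x
        simp only [Finset.mem_union]
        tauto
      rw [heq, h5, IH1, hcardu]
      ring
  -- specialize
  have hFminuniv : Fminus M F Finset.univ = M.E := by
    apply Finset.filter_true_of_mem
    intro x _ j hj
    exact absurd (Finset.mem_univ j) hj
  have hIindep : M.r I = I.card := by
    have h := key ((Finset.univ \ (∅ : Finset (Fin m))).card) ∅ Finset.univ
      (Finset.empty_subset _) rfl
    have hp : Fplus F (∅ : Finset (Fin m)) = ∅ := by simp [Fplus]
    rw [hp, hFminuniv] at h
    simpa [Finset.inter_eq_left.2 hI, hr0] using h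
  constructor
  · -- restriction part
    refine ⟨?_, ?_⟩
    · intro x hx
      rcases Finset.mem_inter.1 hx with ⟨hxI, hxF⟩
      exact Finset.mem_inter.2 ⟨hxF, hI hxI⟩
    · show M.r (I ∩ F i) = (I ∩ F i).card
      have hA : I ∩ F i ⊆ M.E := (Finset.inter_subset_left).trans hI
      have hB : I \ F i ⊆ M.E := (Finset.sdiff_subset).trans hI
      have hsm := M.r_submod hA hB
      have e1 : (I ∩ F i) ∪ (I \ F i) = I := by
        ext x; simp only [Finset.mem_union, Finset.mem_inter, Finset.mem_sdiff]; tauto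
      have e2 : (I ∩ F i) ∩ (I \ F i) = ∅ := by
        ext x; simp only [Finset.mem_inter, Finset.mem_sdiff, Finset.notMem_empty]; tauto
      rw [e1, e2, hr0] at hsm
      have h1 := M.r_le_card hA
      have h2 := M.r_le_card hB
      have h3 : (I ∩ F i).card + (I \ F i).card = I.card :=
        Finset.card_inter_add_card_sdiff I (F i)
      omega
  · -- contraction part
    have h := key ((Finset.univ \ ({i} : Finset (Fin m))).card) {i} Finset.univ
      (Finset.subset_univ _) rfl
    have hp : Fplus F ({i} : Finset (Fin m)) = F i := by simp [Fplus]
    rw [hp, hFminuniv] at h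
    have e : I ∩ (M.E \ F i) = I \ F i := by
      ext x
      simp only [Finset.mem_inter, Finset.mem_sdiff]
      constructor
      · rintro ⟨h1, _, h2⟩; exact ⟨h1, h2⟩
      · rintro ⟨h1, h2⟩; exact ⟨h1, hI h1, h2⟩
    rw [e] at h
    refine ⟨?_, ?_⟩
    · intro x hx
      rcases Finset.mem_sdiff.1 hx with ⟨h1, h2⟩
      exact Finset.mem_sdiff.2 ⟨hI h1, h2⟩
    · show M.r ((I \ F i) ∪ F i ∩ M.E) - M.r (F i ∩ M.E) = (I \ F i).card
      rw [Finset.inter_eq_left.2 (hF i)]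
      omega
end

section
/- Let M be a matroid on a finite set E with rank function r and let F_1, …, F_m ⊆ E. Suppose there exists at least one base B₀ of M with |B₀ ∩ F_i| = r(F_i) for all i ∈ {1,…,m}. Then for every B ⊆ E the following are equivalent: (a) B is a base of M with |B ∩ F_i| = r(F_i) for all i; (b) for every σ ⊆ {1,…,m}, the set B ∩ (F_σ⁻ ∖ F_σ⁺) is a basis of F_σ⁻ ∖ F_σ⁺ in the contraction M/F_σ⁺. -/
open Finset

namespace FinMatroid

variable {α : Type*} [DecidableEq α]

-- ============ auxiliary lemmas ============

variable {M : FinMatroid α} {A B C I J X Y : Finset α} {x : α}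

lemma aux_r_empty (M : FinMatroid α) : M.r ∅ = 0 :=
  Nat.le_zero.mp ((M.r_le_card (empty_subset _)).trans_eq card_empty)

lemma aux_indep_empty (M : FinMatroid α) : M.Indep ∅ :=
  ⟨empty_subset _, by rw [aux_r_empty, card_empty]⟩

lemma aux_r_union_le (hA : A ⊆ M.E) (hB : B ⊆ M.E) : M.r (A ∪ B) ≤ M.r A + B.card := by
  have h1 := M.r_submod hA hB
  have h2 := M.r_le_card hB
  omega

lemma aux_indep_subset (hI : M.Indep I) (hJI : J ⊆ I) : M.Indep J := by
  have hIE := hI.1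
  have hJE : J ⊆ M.E := hJI.trans hIE
  have h1 : M.r J ≤ J.card := M.r_le_card hJE
  have h2 : I = J ∪ (I \ J) := (union_sdiff_of_subset hJI).symm
  have h3 : M.r I ≤ M.r J + (I \ J).card := by
    calc M.r I = M.r (J ∪ (I \ J)) := by rw [union_sdiff_of_subset hJI]
    _ ≤ M.r J + (I \ J).card :=
      aux_r_union_le hJE ((sdiff_subset : I \ J ⊆ I).trans hI.1)
  have h4 : (I \ J).card = I.card - J.card := card_sdiff_of_subset hJI
  have h5 := card_le_card hJI
  have h6 := hI.2
  exact ⟨hJE, by omega⟩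

lemma aux_card_inter_le_r (hI : M.Indep B) (hX : X ⊆ M.E) : (B ∩ X).card ≤ M.r X := by
  have h := aux_indep_subset hI (inter_subset_left : B ∩ X ⊆ B)
  rw [← h.2]
  exact M.r_mono inter_subset_right hX

lemma aux_r_insert_le (hA : A ⊆ M.E) (hx : x ∈ M.E) : M.r (insert x A) ≤ M.r A + 1 := by
  rw [insert_eq, union_comm]
  have := aux_r_union_le hA (singleton_subset_iff.mpr hx)
  simpa using this

lemma aux_spanning (hA : A ⊆ M.E) :
    ∀ Y : Finset α, Y ⊆ M.E → (∀ x ∈ Y, M.r (insert x A) = M.r A) → M.r (A ∪ Y) = M.r A := by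
  intro Y
  induction Y using Finset.induction_on with
  | empty => intro _ _; rw [union_empty]
  | @insert y Y hyY ih =>
    intro hsub hloc
    have hYE : Y ⊆ M.E := (subset_insert _ _).trans hsub
    have hyE : y ∈ M.E := hsub (mem_insert_self _ _)
    have hAY : M.r (A ∪ Y) = M.r A := ih hYE (fun x hx => hloc x (mem_insert_of_mem hx))
    have hins : M.r (insert y A) = M.r A := hloc y (mem_insert_self _ _)
    have h1 : A ∪ insert y Y = (A ∪ Y) ∪ insert y A := by
      ext z; simp only [mem_union, mem_insert]; tauto
    have hsub1 : A ∪ Y ⊆ M.E := union_subset hA hYE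
    have hsub2 : insert y A ⊆ M.E := insert_subset hyE hA
    have hsm := M.r_submod hsub1 hsub2
    have hint : M.r A ≤ M.r ((A ∪ Y) ∩ insert y A) :=
      M.r_mono (subset_inter subset_union_left (subset_insert _ _)) (inter_subset_left.trans hsub1)
    have hmono : M.r A ≤ M.r (A ∪ insert y Y) := M.r_mono subset_union_left (union_subset hA hsub)
    rw [h1] at hmono ⊢
    omega

lemma aux_exists_insert (hI : M.Indep I) (hA : A ⊆ M.E) (h : M.r I < M.r A) :
    ∃ x ∈ A, x ∉ I ∧ M.Indep (insert x I) := by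
  by_contra hcon
  push_neg at hcon
  have hIE := hI.1
  have hloc : ∀ x ∈ A, M.r (insert x I) = M.r I := by
    intro x hx
    by_cases hxI : x ∈ I
    · rw [insert_eq_self.mpr hxI]
    · have h1 := aux_r_insert_le hIE (hA hx)
      have h2 : M.r I ≤ M.r (insert x I) :=
        M.r_mono (subset_insert _ _) (insert_subset (hA hx) hIE)
      by_contra hne
      have hr : M.r (insert x I) = M.r I + 1 := by omega
      exact hcon x hx hxI ⟨insert_subset (hA hx) hIE, by
        rw [hr, hI.2, card_insert_of_notMem hxI]⟩
  have hsp := aux_spanning hIE A hA hloc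
  have hmo : M.r A ≤ M.r (I ∪ A) := M.r_mono subset_union_right (union_subset hIE hA)
  omega

lemma aux_basisOf_iff (hA : A ⊆ M.E) :
    M.BasisOf I A ↔ I ⊆ A ∧ M.Indep I ∧ M.r I = M.r A := by
  constructor
  · rintro ⟨hIA, hI, hmax⟩
    refine ⟨hIA, hI, ?_⟩
    have hle : M.r I ≤ M.r A := M.r_mono hIA hA
    by_contra hne
    have hlt : M.r I < M.r A := lt_of_le_of_ne hle hne
    obtain ⟨x, hxA, hxI, hind⟩ := aux_exists_insert hI hA hlt
    have := hmax (insert_subset hxA hIA) hind (subset_insert _ _)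
    exact hxI (this ▸ mem_insert_self x I)
  · rintro ⟨hIA, hI, hr⟩
    refine ⟨hIA, hI, fun J hJA hJ hIJ => ?_⟩
    have h1 : M.r J ≤ M.r A := M.r_mono hJA hA
    have h2 : J.card ≤ I.card := by rw [← hJ.2, ← hI.2, hr]; exact h1
    exact (eq_of_subset_of_card_le hIJ h2).symm

lemma aux_base_iff_basisOf : M.Base B ↔ M.BasisOf B M.E := by
  constructor
  · rintro ⟨hI, hmax⟩
    exact ⟨hI.1, hI, fun J _ hJ hBJ => hmax hJ hBJ⟩
  · rintro ⟨hBE, hI, hmax⟩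
    exact ⟨hI, fun J hJ hBJ => hmax hJ.1 hJ hBJ⟩

lemma aux_base_iff : M.Base B ↔ B ⊆ M.E ∧ M.Indep B ∧ M.r B = M.r M.E := by
  rw [aux_base_iff_basisOf, aux_basisOf_iff (Finset.Subset.refl _)]

lemma aux_base_card (hB : M.Base B) : B.card = M.r M.E := by
  obtain ⟨h1, h2, h3⟩ := aux_base_iff.mp hB
  rw [← h2.2, h3]

lemma aux_contract_E (M : FinMatroid α) (C : Finset α) : (M.contract C).E = M.E \ C := rfl

lemma aux_contract_r (hC : C ⊆ M.E) (A : Finset α) :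
    (M.contract C).r A = M.r (A ∪ C) - M.r C := by
  show M.r (A ∪ C ∩ M.E) - M.r (C ∩ M.E) = _
  rw [inter_eq_left.mpr hC]

lemma aux_contract_indep_iff (hC : C ⊆ M.E) :
    (M.contract C).Indep J ↔ J ⊆ M.E \ C ∧ M.r (J ∪ C) = J.card + M.r C := by
  unfold Indep
  rw [aux_contract_r hC, aux_contract_E]
  constructor
  · rintro ⟨h1, h2⟩
    have hm : M.r C ≤ M.r (J ∪ C) :=
      M.r_mono subset_union_right (union_subset (h1.trans sdiff_subset) hC)
    exact ⟨h1, by omega⟩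
  · rintro ⟨h1, h2⟩
    exact ⟨h1, by omega⟩

lemma aux_indep_union_contract (hC : C ⊆ M.E) (hI : M.Indep I) (hIC : I ⊆ C)
    (hJ : (M.contract C).Indep J) : M.Indep (I ∪ J) := by
  obtain ⟨hJE, hJr⟩ := (aux_contract_indep_iff hC).mp hJ
  have hdisj : Disjoint I J :=
    disjoint_left.mpr fun {x} hxI hxJ => (mem_sdiff.mp (hJE hxJ)).2 (hIC hxI)
  have hIJE : I ∪ J ⊆ M.E := union_subset (hIC.trans hC) (hJE.trans sdiff_subset)
  have e1 : (I ∪ J) ∪ C = J ∪ C := by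
    rw [union_assoc, union_comm J C, ← union_assoc, union_eq_right.mpr hIC, union_comm]
  have hsm := M.r_submod hIJE hC
  rw [e1] at hsm
  have hint : M.r I ≤ M.r ((I ∪ J) ∩ C) :=
    M.r_mono (subset_inter subset_union_left hIC) (inter_subset_left.trans hIJE)
  have hcard : (I ∪ J).card = I.card + J.card := card_union_of_disjoint hdisj
  have hle := M.r_le_card hIJE
  have hI2 := hI.2
  exact ⟨hIJE, by omega⟩

lemma aux_tight_union_inter (hI : M.Indep B) (hX : X ⊆ M.E) (hY : Y ⊆ M.E)
    (htX : (B ∩ X).card = M.r X) (htY : (B ∩ Y).card = M.r Y) :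
    (B ∩ (X ∪ Y)).card = M.r (X ∪ Y) ∧ (B ∩ (X ∩ Y)).card = M.r (X ∩ Y) := by
  have e1 : B ∩ (X ∪ Y) = (B ∩ X) ∪ (B ∩ Y) := inter_union_distrib_left _ _ _
  have e2 : B ∩ (X ∩ Y) = (B ∩ X) ∩ (B ∩ Y) := inter_inter_distrib_left _ _ _
  have h1 : (B ∩ (X ∪ Y)).card + (B ∩ (X ∩ Y)).card = (B ∩ X).card + (B ∩ Y).card := by
    rw [e1, e2]; exact card_union_add_card_inter _ _
  have h2 := M.r_submod hX hY
  have h3 := aux_card_inter_le_r hI (union_subset hX hY)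
  have h4 := aux_card_inter_le_r (X := X ∩ Y) hI (inter_subset_left.trans hX)
  constructor <;> omega

end FinMatroid

namespace Statement6Aux

open FinMatroid

variable {α : Type*} [DecidableEq α] {m : ℕ} {M : FinMatroid α} {F : Fin m → Finset α}
  {B X : Finset α} {σ τ : Finset (Fin m)} {x : α}

lemma Fplus_subset (hF : ∀ i, F i ⊆ M.E) (σ : Finset (Fin m)) : Fplus F σ ⊆ M.E :=
  Finset.sup_le fun i _ => hF i

lemma mem_Fplus : x ∈ Fplus F σ ↔ ∃ i ∈ σ, x ∈ F i := Finset.mem_sup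

lemma Fminus_subset (M : FinMatroid α) (F : Fin m → Finset α) (σ : Finset (Fin m)) :
    Fminus M F σ ⊆ M.E := filter_subset _ _

lemma mem_D_iff : x ∈ Fminus M F σ \ Fplus F σ ↔
    x ∈ M.E ∧ σ = Finset.univ.filter (fun i => x ∉ F i) := by
  constructor
  · rintro hx
    rw [mem_sdiff] at hx
    obtain ⟨hm, hp⟩ := hx
    rw [Fminus, mem_filter] at hm
    refine ⟨hm.1, ?_⟩
    ext i
    simp only [mem_filter, mem_univ, true_and]
    constructor
    · intro hiσ hxFi
      exact hp (mem_Fplus.mpr ⟨i, hiσ, hxFi⟩)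
    · intro hxFi
      by_contra hiσ
      exact hxFi (hm.2 i hiσ)
  · rintro ⟨hxE, rfl⟩
    rw [mem_sdiff, Fminus, mem_filter]
    refine ⟨⟨hxE, fun j hj => ?_⟩, fun hsup => ?_⟩
    · simp only [mem_filter, mem_univ, true_and] at hj
      exact not_not.mp hj
    · obtain ⟨i, hi, hxi⟩ := mem_Fplus.mp hsup
      simp only [mem_filter, mem_univ, true_and] at hi
      exact hi hxi

lemma D_subset : Fminus M F σ \ Fplus F σ ⊆ M.E :=
  (sdiff_subset).trans (Fminus_subset M F σ)

lemma D_disjoint (hστ : σ ≠ τ) :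
    Disjoint (Fminus M F σ \ Fplus F σ) (Fminus M F τ \ Fplus F τ) := by
  rw [disjoint_left]
  intro x hxσ hxτ
  obtain ⟨_, h1⟩ := mem_D_iff.mp hxσ
  obtain ⟨_, h2⟩ := mem_D_iff.mp hxτ
  exact hστ (h1.trans h2.symm)

lemma E_eq_biUnion (M : FinMatroid α) (F : Fin m → Finset α) :
    M.E = Finset.univ.biUnion (fun σ => Fminus M F σ \ Fplus F σ) := by
  ext x
  rw [mem_biUnion]
  constructor
  · intro hx
    exact ⟨_, mem_univ _, mem_D_iff.mpr ⟨hx, rfl⟩⟩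
  · rintro ⟨σ, _, hx⟩
    exact D_subset hx

lemma F_eq_biUnion (hF : ∀ i, F i ⊆ M.E) (i : Fin m) :
    F i = (Finset.univ.filter (fun σ : Finset (Fin m) => i ∉ σ)).biUnion
      (fun σ => Fminus M F σ \ Fplus F σ) := by
  ext x
  rw [mem_biUnion]
  constructor
  · intro hx
    refine ⟨Finset.univ.filter (fun j => x ∉ F j), ?_, mem_D_iff.mpr ⟨hF i hx, rfl⟩⟩
    simp only [mem_filter, mem_univ, true_and, not_not]
    exact hx
  · rintro ⟨σ, hσ, hx⟩
    obtain ⟨hxE, rfl⟩ := mem_D_iff.mp hx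
    simp only [mem_filter, mem_univ, true_and, not_not] at hσ
    exact hσ

lemma count_inter (B' : Finset α) (T : Finset (Finset (Fin m))) :
    (B' ∩ T.biUnion (fun σ => Fminus M F σ \ Fplus F σ)).card
      = ∑ σ ∈ T, (B' ∩ (Fminus M F σ \ Fplus F σ)).card := by
  have e : B' ∩ T.biUnion (fun σ => Fminus M F σ \ Fplus F σ)
      = T.biUnion (fun σ => B' ∩ (Fminus M F σ \ Fplus F σ)) := by
    ext x
    simp only [mem_inter, mem_biUnion]
    tauto
  rw [e]
  exact card_biUnion fun σ _ τ _ hne =>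
    (D_disjoint hne).mono inter_subset_right inter_subset_right

lemma tight_Fplus (hF : ∀ i, F i ⊆ M.E) (hBind : M.Indep B)
    (ht : ∀ i, (B ∩ F i).card = M.r (F i)) (σ : Finset (Fin m)) :
    (B ∩ Fplus F σ).card = M.r (Fplus F σ) := by
  induction σ using Finset.induction_on with
  | empty => simp [Fplus, aux_r_empty]
  | @insert i σ' hi ih =>
    have e : Fplus F (insert i σ') = F i ∪ Fplus F σ' := by
      rw [Fplus, Finset.sup_insert, sup_eq_union]; rfl
    rw [e]
    exact (aux_tight_union_inter hBind (hF i) (Fplus_subset hF σ') (ht i) ih).1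

lemma tight_filter (hF : ∀ i, F i ⊆ M.E) (hBase : M.Base B)
    (ht : ∀ i, (B ∩ F i).card = M.r (F i)) (s : Finset (Fin m)) :
    (B ∩ M.E.filter (fun x => ∀ j ∈ s, x ∈ F j)).card
      = M.r (M.E.filter (fun x => ∀ j ∈ s, x ∈ F j)) := by
  have hBind : M.Indep B := hBase.1
  induction s using Finset.induction_on with
  | empty =>
    have e : M.E.filter (fun x => ∀ j ∈ (∅ : Finset (Fin m)), x ∈ F j) = M.E :=
      filter_true_of_mem (by simp)
    rw [e, inter_eq_left.mpr hBind.1, ← aux_base_card hBase]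
  | @insert j s hj ih =>
    have e : M.E.filter (fun x => ∀ k ∈ insert j s, x ∈ F k)
        = F j ∩ M.E.filter (fun x => ∀ k ∈ s, x ∈ F k) := by
      ext x
      simp only [mem_filter, mem_inter, mem_insert]
      constructor
      · rintro ⟨hE, hall⟩
        exact ⟨hall j (Or.inl rfl), hE, fun k hk => hall k (Or.inr hk)⟩
      · rintro ⟨hxj, hE, hall⟩
        exact ⟨hE, fun k hk => hk.elim (fun h => h ▸ hxj) (hall k)⟩
    rw [e]
    exact (aux_tight_union_inter hBind (hF j) (filter_subset _ _) (ht j) ih).2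

lemma tight_Fminus (hF : ∀ i, F i ⊆ M.E) (hBase : M.Base B)
    (ht : ∀ i, (B ∩ F i).card = M.r (F i)) (σ : Finset (Fin m)) :
    (B ∩ Fminus M F σ).card = M.r (Fminus M F σ) := by
  have e : Fminus M F σ = M.E.filter (fun x => ∀ j ∈ σᶜ, x ∈ F j) := by
    ext x
    simp only [Fminus, mem_filter, Finset.mem_compl]
  rw [e]
  exact tight_filter hF hBase ht σᶜ

/-- Forward direction, for a fixed σ. -/
lemma forward (hF : ∀ i, F i ⊆ M.E) (hBase : M.Base B)
    (ht : ∀ i, (B ∩ F i).card = M.r (F i)) (σ : Finset (Fin m)) :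
    (M.contract (Fplus F σ)).BasisOf (B ∩ (Fminus M F σ \ Fplus F σ))
      (Fminus M F σ \ Fplus F σ) := by
  have hBind : M.Indep B := hBase.1
  set C := Fplus F σ with hCdef
  set Dm := Fminus M F σ with hDmdef
  have hC : C ⊆ M.E := Fplus_subset hF σ
  have hDmE : Dm ⊆ M.E := Fminus_subset M F σ
  set A := Dm \ C with hAdef
  have hAE : A ⊆ M.E := (sdiff_subset).trans hDmE
  have hAC : A ∪ C = Dm ∪ C := sdiff_union_self_eq_union
  have t1 : (B ∩ C).card = M.r C := tight_Fplus hF hBind ht σ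
  have tDm : (B ∩ Dm).card = M.r Dm := tight_Fminus hF hBase ht σ
  have t2 : (B ∩ (Dm ∪ C)).card = M.r (Dm ∪ C) :=
    (aux_tight_union_inter hBind hDmE hC tDm t1).1
  have hsplit : B ∩ (Dm ∪ C) = (B ∩ A) ∪ (B ∩ C) := by
    ext x
    simp only [mem_inter, mem_union, hAdef, mem_sdiff]
    tauto
  have hdisjAC : Disjoint (B ∩ A) (B ∩ C) := by
    refine Finset.disjoint_left.mpr fun {y} hy1 hy2 => ?_
    exact (mem_sdiff.mp (mem_inter.mp hy1).2).2 (mem_inter.mp hy2).2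
  have hcardsplit : (B ∩ (Dm ∪ C)).card = (B ∩ A).card + (B ∩ C).card := by
    rw [hsplit]; exact card_union_of_disjoint hdisjAC
  -- rank of (B ∩ A) ∪ C
  have hub : M.r ((B ∩ A) ∪ C) ≤ (B ∩ A).card + M.r C := by
    have h := aux_r_union_le (A := C) (B := B ∩ A) hC (inter_subset_right.trans hAE)
    rw [union_comm] at h
    omega
  have hindBAC : M.Indep ((B ∩ A) ∪ (B ∩ C)) :=
    aux_indep_subset hBind (union_subset inter_subset_left inter_subset_left)
  have hlb : (B ∩ A).card + M.r C ≤ M.r ((B ∩ A) ∪ C) := by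
    have h1 : M.r ((B ∩ A) ∪ (B ∩ C)) ≤ M.r ((B ∩ A) ∪ C) :=
      M.r_mono (union_subset_union (Finset.Subset.refl _) inter_subset_right)
        (union_subset ((inter_subset_right).trans hAE) hC)
    have h2 := hindBAC.2
    have h3 : ((B ∩ A) ∪ (B ∩ C)).card = (B ∩ A).card + (B ∩ C).card :=
      card_union_of_disjoint hdisjAC
    omega
  have heqi : M.r ((B ∩ A) ∪ C) = (B ∩ A).card + M.r C := le_antisymm hub hlb
  have hspan : M.r ((B ∩ A) ∪ C) = M.r (A ∪ C) := by
    have h : M.r (A ∪ C) = (B ∩ A).card + M.r C := by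
      rw [hAC, ← t2, hcardsplit, t1]
    rw [heqi, h]
  have hANE : A ⊆ (M.contract C).E := by
    rw [aux_contract_E]
    exact sdiff_subset_sdiff hDmE (Finset.Subset.refl _)
  refine (aux_basisOf_iff hANE).mpr ⟨inter_subset_right, ?_, ?_⟩
  · exact (aux_contract_indep_iff hC).mpr
      ⟨(inter_subset_right).trans (sdiff_subset_sdiff hDmE (Finset.Subset.refl _)), heqi⟩
  · rw [aux_contract_r hC, aux_contract_r hC, hspan]

/-- Independence of B from pieces, by strong induction. -/
lemma indep_of_pieces (hF : ∀ i, F i ⊆ M.E) (hBE : B ⊆ M.E)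
    (hyp : ∀ σ : Finset (Fin m),
      (M.contract (Fplus F σ)).Indep (B ∩ (Fminus M F σ \ Fplus F σ)))
    (S : Finset (Finset (Fin m))) :
    M.Indep (B ∩ S.biUnion (fun τ => Fminus M F τ \ Fplus F τ)) := by
  induction S using Finset.strongInduction with
  | _ S ih =>
    rcases S.eq_empty_or_nonempty with rfl | hne
    · simpa using aux_indep_empty M
    · obtain ⟨σ, hσS, hmax⟩ := S.exists_max_image (fun τ => τ.card) hne
      have hub : ∀ τ ∈ S.erase σ, Fminus M F τ \ Fplus F τ ⊆ Fplus F σ := by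
        intro τ hτ x hx
        obtain ⟨hxE, hτx⟩ := mem_D_iff.mp hx
        by_contra hxC
        have hsub : σ ⊆ Finset.univ.filter (fun i => x ∉ F i) := by
          intro i hi
          simp only [mem_filter, mem_univ, true_and]
          exact fun hxFi => hxC (mem_Fplus.mpr ⟨i, hi, hxFi⟩)
        rw [← hτx] at hsub
        have hcard := hmax τ (mem_of_mem_erase hτ)
        exact ne_of_mem_erase hτ (eq_of_subset_of_card_le hsub hcard).symm
      have hS : S = insert σ (S.erase σ) := (insert_erase hσS).symm
      rw [hS, biUnion_insert, inter_union_distrib_left, union_comm]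
      have hI := ih (S.erase σ) (erase_ssubset hσS)
      have hIC : B ∩ (S.erase σ).biUnion (fun τ => Fminus M F τ \ Fplus F τ) ⊆ Fplus F σ := by
        intro x hx
        obtain ⟨hxB, hx2⟩ := mem_inter.mp hx
        obtain ⟨τ, hτ, hxτ⟩ := mem_biUnion.mp hx2
        exact hub τ hτ hxτ
      exact aux_indep_union_contract (Fplus_subset hF σ) hI hIC (hyp σ)

end Statement6Aux

open FinMatroid Statement6Aux

/-- If some base `B₀` satisfies `|B₀ ∩ F i| = r (F i)` for all `i`, then for
every `B ⊆ E`: `B` is such a base iff for every `σ ⊆ [m]` the set `B ∩ (F_σ⁻ \ F_σ⁺)` is a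
basis of `F_σ⁻ \ F_σ⁺` in `M / F_σ⁺`. -/
theorem statement6 {α : Type*} [DecidableEq α] {m : ℕ} (M : FinMatroid α)
    (F : Fin m → Finset α) (hF : ∀ i, F i ⊆ M.E)
    (hexists : ∃ B₀ : Finset α, M.Base B₀ ∧ ∀ i, (B₀ ∩ F i).card = M.r (F i))
    (B : Finset α) (hB : B ⊆ M.E) :
    (M.Base B ∧ ∀ i, (B ∩ F i).card = M.r (F i)) ↔
      ∀ σ : Finset (Fin m),
        (M.contract (Fplus F σ)).BasisOf (B ∩ (Fminus M F σ \ Fplus F σ))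
          (Fminus M F σ \ Fplus F σ) := by
  classical
  obtain ⟨B₀, hB₀, ht₀⟩ := hexists
  constructor
  · rintro ⟨hBase, ht⟩
    exact forward hF hBase ht
  · intro hyp
    have hB₀E : B₀ ⊆ M.E := hB₀.1.1
    have hDsubN : ∀ σ : Finset (Fin m),
        (Fminus M F σ \ Fplus F σ) ⊆ (M.contract (Fplus F σ)).E := by
      intro σ
      rw [aux_contract_E]
      exact sdiff_subset_sdiff (Fminus_subset M F σ) (Finset.Subset.refl _)
    have hcard_eq : ∀ (σ : Finset (Fin m)) {B' : Finset α},
        (M.contract (Fplus F σ)).BasisOf (B' ∩ (Fminus M F σ \ Fplus F σ))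
          (Fminus M F σ \ Fplus F σ) →
        (B' ∩ (Fminus M F σ \ Fplus F σ)).card
          = (M.contract (Fplus F σ)).r (Fminus M F σ \ Fplus F σ) := by
      intro σ B' hb
      obtain ⟨_, hind, hr⟩ := (aux_basisOf_iff (hDsubN σ)).mp hb
      rw [← hr, hind.2]
    have hper : ∀ σ : Finset (Fin m),
        (B ∩ (Fminus M F σ \ Fplus F σ)).card = (B₀ ∩ (Fminus M F σ \ Fplus F σ)).card := by
      intro σ
      rw [hcard_eq σ (hyp σ), hcard_eq σ (forward hF hB₀ ht₀ σ)]
    have hBcard : B.card = B₀.card := by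
      have e := E_eq_biUnion M F
      have c1 : (B ∩ M.E).card
          = ∑ σ ∈ Finset.univ, (B ∩ (Fminus M F σ \ Fplus F σ)).card := by
        conv_lhs => rw [e]
        exact count_inter B Finset.univ
      have c2 : (B₀ ∩ M.E).card
          = ∑ σ ∈ Finset.univ, (B₀ ∩ (Fminus M F σ \ Fplus F σ)).card := by
        conv_lhs => rw [e]
        exact count_inter B₀ Finset.univ
      rw [inter_eq_left.mpr hB] at c1
      rw [inter_eq_left.mpr hB₀E] at c2
      rw [c1, c2]
      exact Finset.sum_congr rfl fun σ _ => hper σ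
    have hFcard : ∀ i, (B ∩ F i).card = M.r (F i) := by
      intro i
      have e := F_eq_biUnion hF i
      have c1 : (B ∩ F i).card
          = ∑ σ ∈ Finset.univ.filter (fun σ : Finset (Fin m) => i ∉ σ),
              (B ∩ (Fminus M F σ \ Fplus F σ)).card := by
        conv_lhs => rw [e]
        exact count_inter B _
      have c2 : (B₀ ∩ F i).card
          = ∑ σ ∈ Finset.univ.filter (fun σ : Finset (Fin m) => i ∉ σ),
              (B₀ ∩ (Fminus M F σ \ Fplus F σ)).card := by
        conv_lhs => rw [e]
        exact count_inter B₀ _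
      calc (B ∩ F i).card
          = ∑ σ ∈ Finset.univ.filter (fun σ : Finset (Fin m) => i ∉ σ),
              (B ∩ (Fminus M F σ \ Fplus F σ)).card := c1
        _ = ∑ σ ∈ Finset.univ.filter (fun σ : Finset (Fin m) => i ∉ σ),
              (B₀ ∩ (Fminus M F σ \ Fplus F σ)).card :=
            Finset.sum_congr rfl fun σ _ => hper σ
        _ = (B₀ ∩ F i).card := c2.symm
        _ = M.r (F i) := ht₀ i
    have hBind : M.Indep B := by
      have h := indep_of_pieces hF hB (fun σ => (hyp σ).2.1) Finset.univ
      rwa [← E_eq_biUnion M F, inter_eq_left.mpr hB] at h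
    have hBase : M.Base B :=
      aux_base_iff.mpr ⟨hB, hBind, by rw [hBind.2, hBcard, aux_base_card hB₀]⟩
    exact ⟨hBase, hFcard⟩
end
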